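/- arXiv:1201.1052 — 5 statements merged into one kernel-verified Lean document; each statement's English description precedes it below -/
import Mathlib

section
/- If (Δ_j)_{j≥0} are i.i.d. nonnegative-integer-valued random variables, then P(i ∈ R) = ∏_{j=1}^{i} (1 - P(Δ_0 ≥ j)), where R = ℤ_{≥0} \ ⋃_{j≥0}(j, j+Δ_j]. -/
open MeasureTheory ProbabilityTheory

/-- If `(Δ_j)_{j≥0}` are i.i.d. nonnegative-integer random variables and
`R = ℤ_{≥0} \ ⋃_j (j, j+Δ_j]` (i.e. `i ∈ R` iff `j + Δ_j < i` for all `j < i`), then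
`P(i ∈ R) = ∏_{j=1}^{i} (1 - P(Δ_0 ≥ j))`. -/
theorem stmt3 {Ω : Type*} [MeasureSpace Ω] [IsProbabilityMeasure (ℙ : Measure Ω)]
    (Δ : ℕ → Ω → ℕ) (hmeas : ∀ j, Measurable (Δ j))
    (hindep : iIndepFun Δ ℙ)
    (hident : ∀ j, Measure.map (Δ j) ℙ = Measure.map (Δ 0) ℙ)
    (i : ℕ) :
    ℙ {ω | ∀ j < i, j + Δ j ω < i}
      = ∏ j ∈ Finset.Icc 1 i, (1 - ℙ {ω | j ≤ Δ 0 ω}) := by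
  have hset : {ω : Ω | ∀ j < i, j + Δ j ω < i}
      = ⋂ j ∈ Finset.range i, (Δ j) ⁻¹' {n | n < i - j} := by
    ext ω
    simp only [Set.mem_setOf_eq, Set.mem_iInter, Finset.mem_range, Set.mem_preimage]
    constructor
    · intro h j hj; have := h j hj; omega
    · intro h j hj; have := h j hj; omega
  rw [hset, hindep.meas_biInter (fun j _ => ⟨{n | n < i - j}, measurableSet_lt measurable_id' measurable_const, rfl⟩)]
  -- each factor
  have hfac : ∀ j : ℕ, ℙ ((Δ j) ⁻¹' {n | n < i - j}) = 1 - ℙ {ω | i - j ≤ Δ 0 ω} := by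
    intro j
    have h1 : ℙ ((Δ j) ⁻¹' {n | n < i - j}) = ℙ ((Δ 0) ⁻¹' {n | n < i - j}) := by
      rw [← Measure.map_apply (hmeas j) (measurableSet_lt measurable_id' measurable_const),
        hident j,
        Measure.map_apply (hmeas 0) (measurableSet_lt measurable_id' measurable_const)]
    have h2 : (Δ 0) ⁻¹' {n | n < i - j} = {ω | i - j ≤ Δ 0 ω}ᶜ := by
      ext ω; simp only [Set.mem_preimage, Set.mem_setOf_eq, Set.mem_compl_iff, not_le]
    rw [h1, h2, prob_compl_eq_one_sub]
    exact (hmeas 0) measurableSet_Ici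
  simp_rw [hfac]
  refine Finset.prod_bij' (fun j _ => i - j) (fun k _ => i - k) ?_ ?_ ?_ ?_ ?_
  · intro j hj; simp only [Finset.mem_range] at hj; simp only [Finset.mem_Icc]; omega
  · intro k hk; simp only [Finset.mem_Icc] at hk; simp only [Finset.mem_range]; omega
  · intro j hj; simp only [Finset.mem_range] at hj; omega
  · intro k hk; simp only [Finset.mem_Icc] at hk; omega
  · intro j hj; rfl
end

section
/- Let (Δ_j)_{j≥0} be i.i.d. nonnegative-integer random variables with P(Δ_0 ≥ m) ~ 2/m as m→∞ and P(Δ_0 = 0) > 0. Then P(i ∈ R) = i^{-2+o(1)} as i→∞, where R = ℤ_{≥0} \ ⋃_j (j, j+Δ_j]. In particular ∑_i P(i ∈ R) < ∞, so R is almost surely finite. -/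
open MeasureTheory ProbabilityTheory Filter Topology

private lemma harmonic_real' (n : ℕ) :
    ((harmonic n : ℝ)) = ∑ k ∈ Finset.range n, ((k:ℝ)+1)⁻¹ := by
  rw [harmonic]; push_cast; rfl

private lemma Hsum_le' (n : ℕ) : ∑ k ∈ Finset.range n, ((k:ℝ)+1)⁻¹ ≤ 1 + Real.log n := by
  rw [← harmonic_real']; exact harmonic_le_one_add_log n

private lemma le_Hsum' (n : ℕ) : Real.log (n+1) ≤ ∑ k ∈ Finset.range n, ((k:ℝ)+1)⁻¹ := by
  rw [← harmonic_real']; exact_mod_cast log_add_one_le_harmonic n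

private lemma log_nat_tendsto' : Tendsto (fun n : ℕ => Real.log n) atTop atTop :=
  Real.tendsto_log_atTop.comp tendsto_natCast_atTop_atTop

private lemma wcesaro0' {v : ℕ → ℝ} (h : Tendsto v atTop (nhds 0)) :
    Tendsto (fun n : ℕ => (∑ k ∈ Finset.range n, v k / ((k:ℝ)+1)) / Real.log n) atTop (nhds 0) := by
  rw [NormedAddCommGroup.tendsto_nhds_zero]
  intro ε hε
  obtain ⟨K, hK⟩ := Metric.tendsto_atTop.mp h (ε/4) (by linarith)
  set C : ℝ := ∑ k ∈ Finset.range K, |v k| / ((k:ℝ)+1) with hC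
  have hC0 : 0 ≤ C := Finset.sum_nonneg fun k _ => div_nonneg (abs_nonneg _) (by positivity)
  have hlog1 : ∀ᶠ n : ℕ in atTop, 1 ≤ Real.log n := log_nat_tendsto'.eventually_ge_atTop 1
  have hlog2 : ∀ᶠ n : ℕ in atTop, (C + ε/4 + ε/4) / (ε/4) ≤ Real.log n :=
    log_nat_tendsto'.eventually_ge_atTop _
  filter_upwards [hlog1, hlog2, eventually_ge_atTop K] with n h1 h2 hKn
  have hlogpos : (0:ℝ) < Real.log n := lt_of_lt_of_le one_pos h1
  have habs : |∑ k ∈ Finset.range n, v k / ((k:ℝ)+1)| ≤ C + (ε/4) * (1 + Real.log n) := by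
    calc |∑ k ∈ Finset.range n, v k / ((k:ℝ)+1)|
        ≤ ∑ k ∈ Finset.range n, |v k / ((k:ℝ)+1)| := Finset.abs_sum_le_sum_abs _ _
      _ = ∑ k ∈ Finset.range n, |v k| / ((k:ℝ)+1) := by
          refine Finset.sum_congr rfl fun k _ => ?_
          rw [abs_div, abs_of_pos (show (0:ℝ) < (k:ℝ)+1 by positivity)]
      _ = C + ∑ k ∈ Finset.Ico K n, |v k| / ((k:ℝ)+1) := by
          rw [hC, ← Finset.sum_range_add_sum_Ico _ hKn]
      _ ≤ C + ∑ k ∈ Finset.Ico K n, (ε/4) * ((k:ℝ)+1)⁻¹ := by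
          refine add_le_add_right (Finset.sum_le_sum fun k hk => ?_) C
          rw [div_eq_mul_inv]
          refine mul_le_mul_of_nonneg_right ?_ (by positivity)
          have := hK k (Finset.mem_Ico.mp hk).1
          rw [Real.dist_eq, sub_zero] at this
          exact this.le
      _ ≤ C + ∑ k ∈ Finset.range n, (ε/4) * ((k:ℝ)+1)⁻¹ := by
          refine add_le_add_right (Finset.sum_le_sum_of_subset_of_nonneg ?_
            (fun k _ _ => by positivity)) C
          rw [Finset.range_eq_Ico]
          exact Finset.Ico_subset_Ico (Nat.zero_le K) le_rfl
      _ = C + (ε/4) * ∑ k ∈ Finset.range n, ((k:ℝ)+1)⁻¹ := by rw [Finset.mul_sum]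
      _ ≤ C + (ε/4) * (1 + Real.log n) :=
          add_le_add_right (mul_le_mul_of_nonneg_left (Hsum_le' n) (by linarith)) C
  have heq : ‖(∑ k ∈ Finset.range n, v k / ((k:ℝ)+1)) / Real.log n‖
      = |∑ k ∈ Finset.range n, v k / ((k:ℝ)+1)| / Real.log n := by
    rw [Real.norm_eq_abs, abs_div, abs_of_pos hlogpos]
  rw [heq]
  have h3 : (C + ε/4 + ε/4) ≤ (ε/4) * Real.log n := by
    rw [div_le_iff₀ (by linarith : (0:ℝ) < ε/4)] at h2
    linarith [h2]
  have hnum : |∑ k ∈ Finset.range n, v k / ((k:ℝ)+1)| ≤ (ε/2) * Real.log n := by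
    nlinarith
  calc |∑ k ∈ Finset.range n, v k / ((k:ℝ)+1)| / Real.log n
      ≤ ((ε/2) * Real.log n) / Real.log n := by gcongr
    _ = ε/2 := by field_simp
    _ < ε := by linarith

private lemma Hsum_div_log' : Tendsto (fun n : ℕ =>
    (∑ k ∈ Finset.range n, ((k:ℝ)+1)⁻¹) / Real.log n) atTop (nhds 1) := by
  have hlow : ∀ᶠ n : ℕ in atTop, 1 ≤ (∑ k ∈ Finset.range n, ((k:ℝ)+1)⁻¹) / Real.log n := by
    filter_upwards [log_nat_tendsto'.eventually_ge_atTop 1, eventually_ge_atTop 1] with n h1 hn1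
    have hlogpos : (0:ℝ) < Real.log n := lt_of_lt_of_le one_pos h1
    rw [le_div_iff₀ hlogpos, one_mul]
    refine le_trans ?_ (le_Hsum' n)
    exact Real.log_le_log (by positivity) (by linarith)
  have hup : ∀ᶠ n : ℕ in atTop,
      (∑ k ∈ Finset.range n, ((k:ℝ)+1)⁻¹) / Real.log n ≤ 1 + 1 / Real.log n := by
    filter_upwards [log_nat_tendsto'.eventually_ge_atTop 1] with n h1
    have hlogpos : (0:ℝ) < Real.log n := lt_of_lt_of_le one_pos h1
    rw [div_le_iff₀ hlogpos, add_mul, one_mul, div_mul_cancel₀ _ hlogpos.ne']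
    linarith [Hsum_le' n]
  have h2 : Tendsto (fun n : ℕ => 1 + 1 / Real.log n) atTop (nhds 1) := by
    have := log_nat_tendsto'.inv_tendsto_atTop
    have h0 : Tendsto (fun n : ℕ => 1 / Real.log n) atTop (nhds 0) := by
      exact this.congr fun n => (one_div _).symm
    simpa using (tendsto_const_nhds (x := (1:ℝ))).add h0
  exact tendsto_of_tendsto_of_tendsto_of_le_of_le' tendsto_const_nhds h2 hlow hup

private lemma wcesaro' {u : ℕ → ℝ} {l : ℝ} (h : Tendsto u atTop (nhds l)) :
    Tendsto (fun n : ℕ => (∑ k ∈ Finset.range n, u k / ((k:ℝ)+1)) / Real.log n)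
      atTop (nhds l) := by
  have hv : Tendsto (fun k => u k - l) atTop (nhds 0) := by
    simpa using h.sub (tendsto_const_nhds (x := l))
  have h1 := (wcesaro0' hv).add (Hsum_div_log'.const_mul l)
  rw [zero_add, mul_one] at h1
  refine h1.congr fun n => ?_
  rw [mul_div_assoc', ← add_div, Finset.mul_sum, ← Finset.sum_add_distrib]
  congr 1
  refine Finset.sum_congr rfl fun k _ => ?_
  have : ((k:ℝ)+1) ≠ 0 := by positivity
  field_simp
  ring

private lemma loglim' {s : ℕ → ℝ} (h0 : Tendsto s atTop (nhds 0))
    (hne : ∀ᶠ k in atTop, s k ≠ 0)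
    (hm : Tendsto (fun k : ℕ => ((k:ℝ)+1) * s k) atTop (nhds 2)) :
    Tendsto (fun k : ℕ => ((k:ℝ)+1) * Real.log (1 - s k)) atTop (nhds (-2)) := by
  have hder : HasDerivAt (fun x : ℝ => Real.log (1 - x)) (-1) 0 := by
    have h1 : HasDerivAt (fun x : ℝ => 1 - x) (-1) 0 := (hasDerivAt_id 0).const_sub 1
    simpa using h1.log (by norm_num)
  have hslope := hasDerivAt_iff_tendsto_slope.mp hder
  have hs' : Tendsto s atTop (𝓝[≠] (0:ℝ)) :=
    tendsto_nhdsWithin_iff.mpr ⟨h0, hne.mono fun k hk => hk⟩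
  have hcomp : Tendsto (fun k => Real.log (1 - s k) / s k) atTop (nhds (-1)) := by
    have := hslope.comp hs'
    refine this.congr fun k => ?_
    simp [Function.comp, slope_def_field, Real.log_one]
  have hmul := hm.mul hcomp
  rw [show (2:ℝ) * (-1) = -2 by norm_num] at hmul
  refine hmul.congr' ?_
  filter_upwards [hne] with k hk
  field_simp

set_option maxHeartbeats 1000000 in
/-- If `(Δ_j)` are i.i.d. nonnegative-integer random variables with
`P(Δ_0 ≥ m) ~ 2/m` and `P(Δ_0 = 0) > 0`, then `P(i ∈ R) = i^{-2+o(1)}` where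
`R = ℤ_{≥0} \ ⋃_j (j, j+Δ_j]`; in particular `∑_i P(i ∈ R) < ∞` and `R` is a.s. finite. -/
theorem stmt4 {Ω : Type*} [MeasureSpace Ω] [IsProbabilityMeasure (ℙ : Measure Ω)]
    (Δ : ℕ → Ω → ℕ) (hmeas : ∀ j, Measurable (Δ j))
    (hindep : iIndepFun Δ ℙ)
    (hident : ∀ j, Measure.map (Δ j) ℙ = Measure.map (Δ 0) ℙ)
    (htail : Tendsto (fun m : ℕ => (m : ℝ) * (ℙ {ω | m ≤ Δ 0 ω}).toReal) atTop (nhds 2))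
    (hzero : 0 < ℙ {ω | Δ 0 ω = 0}) :
    Tendsto (fun i : ℕ =>
        Real.log (ℙ {ω | ∀ j < i, j + Δ j ω < i}).toReal / Real.log i) atTop (nhds (-2))
    ∧ (∑' i : ℕ, ℙ {ω | ∀ j < i, j + Δ j ω < i}) < ⊤
    ∧ ℙ {ω | {i : ℕ | ∀ j < i, j + Δ j ω < i}.Infinite} = 0 := by
  set b : ℕ → ENNReal := fun m => ℙ {ω | Δ 0 ω < m} with hb
  set r : ℕ → ℝ := fun m => (ℙ {ω | m ≤ Δ 0 ω}).toReal with hr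
  -- product formula
  have hP : ∀ i : ℕ, ℙ {ω | ∀ j < i, j + Δ j ω < i} = ∏ k ∈ Finset.range i, b (k+1) := by
    intro i
    have hset : {ω | ∀ j < i, j + Δ j ω < i}
        = ⋂ j ∈ Finset.range i, (Δ j) ⁻¹' {x | x < i - j} := by
      ext ω
      simp only [Set.mem_setOf_eq, Set.mem_iInter, Finset.mem_range, Set.mem_preimage]
      constructor
      · intro h j hj; have := h j hj; omega
      · intro h j hj; have := h j hj; omega
    rw [hset, hindep.meas_biInter (fun j _ => ⟨{x | x < i - j}, trivial, rfl⟩)]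
    have hfac : ∀ j < i, ℙ ((Δ j) ⁻¹' {x | x < i - j}) = ℙ {ω | Δ 0 ω < i - j} := by
      intro j hj
      have h1 : ℙ ((Δ j) ⁻¹' {x | x < i - j}) = (Measure.map (Δ j) ℙ) {x | x < i - j} := by
        rw [Measure.map_apply (hmeas j) trivial]
      rw [h1, hident j, Measure.map_apply (hmeas 0) trivial]
      rfl
    rw [Finset.prod_congr rfl (fun j hj => hfac j (Finset.mem_range.mp hj))]
    rw [← Finset.prod_range_reflect (fun k => b (k + 1)) i]
    refine Finset.prod_congr rfl fun j hj => ?_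
    have hj' := Finset.mem_range.mp hj
    have h2 : i - 1 - j + 1 = i - j := by omega
    rw [h2]
  -- positivity
  have hbpos : ∀ k : ℕ, 0 < (b (k+1)).toReal := by
    intro k
    refine ENNReal.toReal_pos (ne_of_gt (lt_of_lt_of_le hzero ?_)) (measure_ne_top _ _)
    exact measure_mono fun ω h => by simp only [Set.mem_setOf_eq] at h ⊢; omega
  -- complement formula
  have hbr : ∀ m : ℕ, (b m).toReal = 1 - r m := by
    intro m
    have hms : MeasurableSet {ω | m ≤ Δ 0 ω} :=
      (hmeas 0) (trivial : MeasurableSet {x | m ≤ x})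
    have hcompl : {ω | Δ 0 ω < m} = {ω | m ≤ Δ 0 ω}ᶜ := by
      ext ω; simp only [Set.mem_setOf_eq, Set.mem_compl_iff, not_le]
    rw [hb]
    simp only []
    rw [hcompl, prob_compl_eq_one_sub hms,
      ENNReal.toReal_sub_of_le prob_le_one ENNReal.one_ne_top, ENNReal.toReal_one]
  -- r tends to zero
  have hr0 : Tendsto r atTop (nhds 0) := by
    have hinv : Tendsto (fun m : ℕ => ((m:ℝ))⁻¹) atTop (nhds 0) :=
      tendsto_inv_atTop_zero.comp tendsto_natCast_atTop_atTop
    have := htail.mul hinv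
    rw [mul_zero] at this
    refine this.congr' ?_
    filter_upwards [eventually_ge_atTop 1] with m hm
    have : ((m:ℝ)) ≠ 0 := by positivity
    field_simp
    rfl
  -- eventually r positive
  have hne : ∀ᶠ m : ℕ in atTop, r m ≠ 0 := by
    have := htail.eventually (lt_mem_nhds (show (1:ℝ) < 2 by norm_num))
    filter_upwards [this] with m hm
    intro h0
    simp only [hr] at h0
    rw [h0, mul_zero] at hm
    linarith
  -- the key limit
  set s : ℕ → ℝ := fun k => r (k+1) with hs
  have h0s : Tendsto s atTop (nhds 0) := hr0.comp (tendsto_add_atTop_nat 1)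
  have hnes : ∀ᶠ k : ℕ in atTop, s k ≠ 0 := (tendsto_add_atTop_nat 1).eventually hne
  have hm2 : Tendsto (fun k : ℕ => ((k:ℝ)+1) * s k) atTop (nhds 2) := by
    have := htail.comp (tendsto_add_atTop_nat 1)
    refine this.congr fun k => ?_
    simp only [Function.comp, hs]
    push_cast
    ring
  have huc : Tendsto (fun k : ℕ => ((k:ℝ)+1) * Real.log ((b (k+1)).toReal)) atTop
      (nhds (-2)) := by
    have := loglim' h0s hnes hm2
    refine this.congr fun k => ?_
    rw [hbr (k+1)]
  -- part 1
  have part1 : Tendsto (fun i : ℕ =>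
      Real.log (ℙ {ω | ∀ j < i, j + Δ j ω < i}).toReal / Real.log i) atTop (nhds (-2)) := by
    have := wcesaro' huc
    refine this.congr fun i => ?_
    congr 1
    rw [hP i, ENNReal.toReal_prod,
      Real.log_prod (fun k _ => (hbpos k).ne')]
    refine Finset.sum_congr rfl fun k _ => ?_
    rw [mul_div_assoc, mul_comm, div_mul_cancel₀ _ (show ((k:ℝ)+1) ≠ 0 by positivity)]
  -- part 2
  have hev : ∀ᶠ i : ℕ in atTop,
      (ℙ {ω | ∀ j < i, j + Δ j ω < i}).toReal ≤ (i:ℝ) ^ (-(3:ℝ)/2) := by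
    have h32 := part1.eventually (Iio_mem_nhds (show (-2:ℝ) < -(3:ℝ)/2 by norm_num))
    filter_upwards [h32, log_nat_tendsto'.eventually_ge_atTop 1, eventually_ge_atTop 1]
      with i hi hlog hi1
    have hlogpos : (0:ℝ) < Real.log i := lt_of_lt_of_le one_pos hlog
    have hTpos : 0 < (ℙ {ω | ∀ j < i, j + Δ j ω < i}).toReal := by
      rw [hP i, ENNReal.toReal_prod]
      exact Finset.prod_pos fun k _ => hbpos k
    have hlt : Real.log (ℙ {ω | ∀ j < i, j + Δ j ω < i}).toReal
        < (-(3:ℝ)/2) * Real.log i := by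
      calc Real.log (ℙ {ω | ∀ j < i, j + Δ j ω < i}).toReal
          = Real.log (ℙ {ω | ∀ j < i, j + Δ j ω < i}).toReal / Real.log i * Real.log i := by
            field_simp
        _ < (-(3:ℝ)/2) * Real.log i := by
            exact mul_lt_mul_of_pos_right hi hlogpos
    have hipos : (0:ℝ) < (i:ℝ) := by exact_mod_cast Nat.lt_of_lt_of_le Nat.zero_lt_one hi1
    calc (ℙ {ω | ∀ j < i, j + Δ j ω < i}).toReal
        = Real.exp (Real.log (ℙ {ω | ∀ j < i, j + Δ j ω < i}).toReal) :=
          (Real.exp_log hTpos).symm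
      _ ≤ Real.exp (Real.log i * (-(3:ℝ)/2)) := by
          refine Real.exp_le_exp.mpr ?_
          rw [mul_comm]
          exact hlt.le
      _ = (i:ℝ) ^ (-(3:ℝ)/2) := (Real.rpow_def_of_pos hipos _).symm
  obtain ⟨N, hN⟩ := eventually_atTop.mp hev
  have hsum : Summable (fun i : ℕ => (ℙ {ω | ∀ j < i, j + Δ j ω < i}).toReal) := by
    rw [← summable_nat_add_iff N]
    have hsum2 : Summable (fun n : ℕ => (n:ℝ) ^ (-(3:ℝ)/2)) :=
      Real.summable_nat_rpow.mpr (by norm_num)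
    exact Summable.of_nonneg_of_le (fun n => ENNReal.toReal_nonneg)
      (fun n => hN (n+N) (Nat.le_add_left N n)) ((summable_nat_add_iff N).mpr hsum2)
  have part2 : (∑' i : ℕ, ℙ {ω | ∀ j < i, j + Δ j ω < i}) < ⊤ := by
    calc ∑' i : ℕ, ℙ {ω | ∀ j < i, j + Δ j ω < i}
        = ∑' i : ℕ, ENNReal.ofReal ((ℙ {ω | ∀ j < i, j + Δ j ω < i}).toReal) :=
          tsum_congr fun i => (ENNReal.ofReal_toReal (measure_ne_top _ _)).symm
      _ = ENNReal.ofReal (∑' i : ℕ, (ℙ {ω | ∀ j < i, j + Δ j ω < i}).toReal) :=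
          (ENNReal.ofReal_tsum_of_nonneg (fun i => ENNReal.toReal_nonneg) hsum).symm
      _ < ⊤ := ENNReal.ofReal_lt_top
  -- part 3
  have hsub : {ω | {i : ℕ | ∀ j < i, j + Δ j ω < i}.Infinite}
      ⊆ Filter.limsup (fun i => {ω | ∀ j < i, j + Δ j ω < i}) atTop := fun ω hω =>
    Filter.mem_limsup_iff_frequently_mem.mpr (Nat.frequently_atTop_iff_infinite.mpr hω)
  exact ⟨part1, part2, measure_mono_null hsub (measure_limsup_atTop_eq_zero part2.ne)⟩
end

section
/- Let (Δ_j)_{j≥0} be i.i.d. nonnegative-integer random variables with P(Δ_0 = 0) > 0 and m²·P(Δ_0 ≥ m) → 2 as m→∞. Then the infinite product ∏_{j=1}^{∞}(1 - P(Δ_0 ≥ j)) converges to a strictly positive limit; consequently the regenerative set R = ℤ_{≥0} \ ⋃_j(j, j+Δ_j] has positive asymptotic density almost surely. -/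
open MeasureTheory ProbabilityTheory Filter


/-- Weierstrass product inequality. -/
lemma aux_weier {ι : Type*} (s : Finset ι) (f : ι → ℝ) (h0 : ∀ i ∈ s, 0 ≤ f i)
    (h1 : ∀ i ∈ s, f i ≤ 1) : 1 - ∑ i ∈ s, f i ≤ ∏ i ∈ s, (1 - f i) := by
  classical
  induction s using Finset.cons_induction with
  | empty => simp
  | cons a s ha ih =>
    rw [Finset.sum_cons, Finset.prod_cons]
    have hs0 : (0:ℝ) ≤ ∑ i ∈ s, f i :=
      Finset.sum_nonneg fun i hi => h0 i (Finset.mem_cons_of_mem hi)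
    have h := ih (fun i hi => h0 i (Finset.mem_cons_of_mem hi))
      (fun i hi => h1 i (Finset.mem_cons_of_mem hi))
    have ha0 : 0 ≤ f a := h0 a (Finset.mem_cons_self a s)
    have ha1 : f a ≤ 1 := h1 a (Finset.mem_cons_self a s)
    nlinarith

/-- exp bound -/
lemma aux_exp_le (x : ℝ) (h0 : 0 ≤ x) (h1 : x ≤ 1/2) : Real.exp (-(2*x)) ≤ 1 - x := by
  have h2 : 1 + 2*x ≤ Real.exp (2*x) := by linarith [Real.add_one_le_exp (2*x)]
  have h3 : 0 < Real.exp (2*x) := Real.exp_pos _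
  rw [Real.exp_neg, inv_eq_one_div, div_le_iff₀ h3]
  nlinarith [mul_le_mul_of_nonneg_left h2 (show (0:ℝ) ≤ 1-x by linarith)]

/-- harmonic sum bound -/
lemma aux_harmonic (n : ℕ) : ∑ d ∈ Finset.Icc 1 n, (1 / (d:ℝ)) ≤ 2 * Real.sqrt n := by
  induction n with
  | zero => simp
  | succ n ih =>
    rw [Finset.sum_Icc_succ_top (by norm_num)]
    have h1 : Real.sqrt n ^ 2 = n := Real.sq_sqrt (by positivity)
    have h2 : Real.sqrt (n+1) ^ 2 = (n:ℝ)+1 := by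
      rw [Real.sq_sqrt (by positivity)]
    have h3 : (0:ℝ) ≤ Real.sqrt n := Real.sqrt_nonneg _
    have h4 : (0:ℝ) ≤ Real.sqrt (n+1) := Real.sqrt_nonneg _
    have h5 : (0:ℝ) < (n:ℝ)+1 := by positivity
    have key : 1/((n:ℝ)+1) ≤ 2 * Real.sqrt (n+1) - 2 * Real.sqrt n := by
      have hmono : Real.sqrt n ≤ Real.sqrt ((n:ℝ)+1) :=
        Real.sqrt_le_sqrt (by linarith)
      have hs : Real.sqrt ((n:ℝ)+1) ≤ (n:ℝ)+1 := by nlinarith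
      have hdiff : (Real.sqrt ((n:ℝ)+1) - Real.sqrt n) * (Real.sqrt ((n:ℝ)+1) + Real.sqrt n) = 1 := by
        nlinarith
      rw [div_le_iff₀ h5]
      nlinarith
    push_cast
    push_cast at ih
    linarith

lemma aux_nat_sqrt_atTop : Tendsto Nat.sqrt atTop atTop := by
  apply tendsto_atTop_atTop.2
  intro b
  exact ⟨b*b, fun n hn => Nat.le_sqrt.2 hn⟩


lemma aux_ratio_tendsto : Tendsto (fun k : ℕ => ((k:ℝ)/((k:ℝ)+1))^4) atTop (nhds 1) := by
  have h : Tendsto (fun k : ℕ => (k:ℝ)/((k:ℝ)+1)) atTop (nhds 1) := by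
    have := tendsto_natCast_div_add_atTop (𝕜 := ℝ) 1
    simpa using this
  simpa using h.pow 4

lemma aux_ratio_tendsto' : Tendsto (fun k : ℕ => (((k:ℝ)+1)/(k:ℝ))^4) atTop (nhds 1) := by
  have h : Tendsto (fun k : ℕ => ((k:ℝ)+1)/(k:ℝ)) atTop (nhds 1) := by
    have h1 : Tendsto (fun k : ℕ => 1 + (k:ℝ)⁻¹) atTop (nhds (1+0)) :=
      tendsto_const_nhds.add tendsto_inv_atTop_nhds_zero_nat
    rw [add_zero] at h1
    apply h1.congr'
    filter_upwards [eventually_gt_atTop 0] with k hk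
    field_simp
  simpa using h.pow 4

lemma aux_interp (u : ℕ → ℝ) (hmono : ∀ m n, m ≤ n → u m ≤ u n) (h0 : ∀ n, 0 ≤ u n)
    (L : ℝ) (h : Tendsto (fun k : ℕ => u (k^4) / ((k:ℝ)^4)) atTop (nhds L)) :
    Tendsto (fun n : ℕ => u n / n) atTop (nhds L) := by
  set K : ℕ → ℕ := fun n => Nat.sqrt (Nat.sqrt n) with hK
  have hK1 : ∀ n, (K n)^4 ≤ n := by
    intro n
    have h1 : Nat.sqrt n ^ 2 ≤ n := Nat.sqrt_le' n
    have h2 : K n ^ 2 ≤ Nat.sqrt n := Nat.sqrt_le' (Nat.sqrt n)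
    calc (K n)^4 = (K n ^ 2)^2 := by ring
    _ ≤ (Nat.sqrt n)^2 := Nat.pow_le_pow_left h2 2
    _ ≤ n := h1
  have hK2 : ∀ n, n < (K n + 1)^4 := by
    intro n
    have h1 : n < (Nat.sqrt n + 1)^2 := Nat.lt_succ_sqrt' n
    have h2 : Nat.sqrt n < (K n + 1)^2 := Nat.lt_succ_sqrt' (Nat.sqrt n)
    calc n < (Nat.sqrt n + 1)^2 := h1
    _ ≤ ((K n + 1)^2)^2 := Nat.pow_le_pow_left h2 2
    _ = (K n + 1)^4 := by ring
  have hKtop : Tendsto K atTop atTop := aux_nat_sqrt_atTop.comp aux_nat_sqrt_atTop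
  -- lower and upper comparison sequences
  have hlow : Tendsto (fun k : ℕ => u (k^4) / (((k:ℝ)+1)^4)) atTop (nhds L) := by
    have := h.mul aux_ratio_tendsto
    rw [mul_one] at this
    apply this.congr'
    filter_upwards [eventually_gt_atTop 0] with k hk
    have hk0 : (0:ℝ) < (k:ℝ) := by exact_mod_cast hk
    field_simp
  have hup : Tendsto (fun k : ℕ => u ((k+1)^4) / ((k:ℝ)^4)) atTop (nhds L) := by
    have hshift : Tendsto (fun k : ℕ => u ((k+1)^4) / (((k:ℝ)+1)^4)) atTop (nhds L) := by
      have := h.comp (tendsto_add_atTop_nat 1)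
      apply this.congr
      intro k
      simp [Function.comp]
    have := hshift.mul aux_ratio_tendsto'
    rw [mul_one] at this
    apply this.congr'
    filter_upwards [eventually_gt_atTop 0] with k hk
    have hk0 : (0:ℝ) < (k:ℝ) := by exact_mod_cast hk
    field_simp
  refine tendsto_of_tendsto_of_tendsto_of_le_of_le' (hlow.comp hKtop) (hup.comp hKtop) ?_ ?_
  · -- lower ≤ u n / n eventually
    filter_upwards [eventually_gt_atTop 0, hKtop.eventually (eventually_gt_atTop 0)]
      with n hn hKn
    have hn0 : (0:ℝ) < (n:ℝ) := by exact_mod_cast hn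
    have h1 : u ((K n)^4) ≤ u n := hmono _ _ (hK1 n)
    have h2 : (n:ℝ) ≤ ((K n : ℝ)+1)^4 := by
      have h3 : (n:ℝ) ≤ (((K n + 1)^4 : ℕ) : ℝ) := by exact_mod_cast (hK2 n).le
      calc (n:ℝ) ≤ (((K n + 1)^4 : ℕ) : ℝ) := h3
      _ = ((K n : ℝ)+1)^4 := by push_cast; ring
    calc u ((K n)^4) / (((K n : ℝ)+1)^4) ≤ u ((K n)^4) / n := by
          gcongr
          exact h0 _
    _ ≤ u n / n := by gcongr ?_ / _
  · -- u n / n ≤ upper eventually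
    filter_upwards [eventually_gt_atTop 0, hKtop.eventually (eventually_gt_atTop 0)]
      with n hn hKn
    have hn0 : (0:ℝ) < (n:ℝ) := by exact_mod_cast hn
    have hKn0 : (0:ℝ) < (K n : ℝ) := by exact_mod_cast hKn
    have h1 : u n ≤ u ((K n + 1)^4) := hmono _ _ (hK2 n).le
    have h2 : ((K n : ℝ))^4 ≤ (n:ℝ) := by
      exact_mod_cast hK1 n
    calc u n / (n:ℝ) ≤ u n / ((K n : ℝ))^4 := by
          gcongr
          exact h0 _
    _ ≤ u ((K n + 1)^4) / ((K n : ℝ))^4 := by gcongr ?_ / _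

lemma aux_key {Ω : Type*} [MeasureSpace Ω] [IsProbabilityMeasure (ℙ : Measure Ω)]
    (Δ : ℕ → Ω → ℕ) (hmeas : ∀ j, Measurable (Δ j))
    (hindep : iIndepFun Δ ℙ)
    (hident : ∀ j, Measure.map (Δ j) ℙ = Measure.map (Δ 0) ℙ) (i d : ℕ) :
    ℙ ({ω | ∀ j < i, j + Δ j ω < i} ∩ {ω | ∀ j < i+d, j + Δ j ω < i+d})
      = (∏ k ∈ Finset.Icc 1 i, ℙ {ω | Δ 0 ω < k}) * ∏ k ∈ Finset.Icc 1 d, ℙ {ω | Δ 0 ω < k} := by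
  classical
  set sets : ℕ → Set ℕ := fun j => if j < i then {x | j + x < i} else {x | j + x < i + d}
    with hsets
  have hinter : {ω | ∀ j < i, j + Δ j ω < i} ∩ {ω | ∀ j < i+d, j + Δ j ω < i+d}
      = ⋂ j ∈ Finset.range (i+d), Δ j ⁻¹' sets j := by
    ext ω
    simp only [Set.mem_inter_iff, Set.mem_setOf_eq, Set.mem_iInter, Set.mem_preimage,
      Finset.mem_range, hsets]
    constructor
    · rintro ⟨h1, h2⟩ j hj
      by_cases hji : j < i
      · simp only [hji, if_true]
        exact h1 j hji
      · simp only [hji, if_false]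
        exact h2 j hj
    · intro h
      constructor
      · intro j hj
        have := h j (by omega)
        simpa [hj] using this
      · intro j hj
        by_cases hji : j < i
        · have := h j (by omega)
          simp only [hji, if_true] at this
          simp only [Set.mem_setOf_eq] at this
          omega
        · have := h j hj
          simpa [hji] using this
  rw [hinter, hindep.measure_inter_preimage_eq_mul (Finset.range (i+d))
    (fun j _ => trivial)]
  -- single-variable measure identity
  have hsingle : ∀ (j : ℕ) (s : Set ℕ), ℙ (Δ j ⁻¹' s) = ℙ (Δ 0 ⁻¹' s) := by
    intro j s
    rw [← Measure.map_apply (hmeas j) trivial, hident j,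
      Measure.map_apply (hmeas 0) trivial]
  rw [Finset.range_eq_Ico, ← Finset.prod_Ico_consecutive _ (Nat.zero_le i)
    (Nat.le_add_right i d)]
  congr 1
  · -- first block
    rw [Finset.prod_Ico_eq_prod_range]
    rw [show Finset.Icc 1 i = Finset.Ico 1 (i+1) by rfl, Finset.prod_Ico_eq_prod_range]
    simp only [Nat.add_sub_cancel, Nat.sub_zero, zero_add]
    rw [← Finset.prod_range_reflect]
    apply Finset.prod_congr rfl
    intro j hj
    rw [Finset.mem_range] at hj
    have hji : i - 1 - j < i := by omega
    rw [hsets]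
    simp only [hji, if_true]
    rw [hsingle]
    congr 1
    ext x
    simp only [Set.mem_preimage, Set.mem_setOf_eq]
    omega
  · -- second block
    rw [Finset.prod_Ico_eq_prod_range]
    rw [show Finset.Icc 1 d = Finset.Ico 1 (d+1) by rfl, Finset.prod_Ico_eq_prod_range]
    simp only [Nat.add_sub_cancel]
    rw [← Finset.prod_range_reflect]
    simp only [show i + d - i = d from by omega]
    apply Finset.prod_congr rfl
    intro j hj
    rw [Finset.mem_range] at hj
    have hji : ¬ (i + (d - 1 - j) < i) := by omega
    rw [hsets]
    simp only [hji, if_false]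
    rw [hsingle]
    congr 1
    ext x
    simp only [Set.mem_preimage, Set.mem_setOf_eq]
    omega


/-- tail sum bound: if `f k ≤ B / k²` then `∑_{k=d+1}^n f k ≤ B/d`. -/
lemma aux_tail (f : ℕ → ℝ) (B : ℝ) (hB : 0 ≤ B) (hf : ∀ k, 1 ≤ k → f k ≤ B / (k:ℝ)^2)
    (hf0 : ∀ k, 0 ≤ f k) (d : ℕ) (hd : 1 ≤ d) (n : ℕ) :
    ∑ k ∈ Finset.Icc (d+1) n, f k ≤ B / d := by
  rcases le_or_gt n d with h | h
  · rw [Finset.Icc_eq_empty (by omega)]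
    simp only [Finset.sum_empty]
    positivity
  · -- show by induction on n ≥ d the stronger bound B*(1/d - 1/n)
    have key : ∀ m, d ≤ m → ∑ k ∈ Finset.Icc (d+1) m, f k ≤ B * (1/(d:ℝ) - 1/(m:ℝ)) := by
      intro m hm
      induction m, hm using Nat.le_induction with
      | base => rw [Finset.Icc_eq_empty (by omega)]; simp
      | succ m hm ih =>
        rw [Finset.sum_Icc_succ_top (by omega)]
        have hd0 : (0:ℝ) < (d:ℝ) := by exact_mod_cast hd
        have hm0 : (0:ℝ) < (m:ℝ) := by exact_mod_cast (by omega : 0 < m)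
        have hm1 : (0:ℝ) < (m:ℝ)+1 := by linarith
        have hb : f (m+1) ≤ B / ((m:ℝ)+1)^2 := by
          have := hf (m+1) (by omega)
          push_cast at this
          exact this
        have hstep : B / ((m:ℝ)+1)^2 ≤ B * (1/(m:ℝ) - 1/((m:ℝ)+1)) := by
          rw [div_le_iff₀ (by positivity)]
          have h1 : 1/(m:ℝ) - 1/((m:ℝ)+1) = 1/((m:ℝ)*((m:ℝ)+1)) := by
            field_simp
            ring
          rw [h1]
          rw [show B * (1/((m:ℝ)*((m:ℝ)+1))) * ((m:ℝ)+1)^2 = B * (((m:ℝ)+1)/(m:ℝ)) by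
            field_simp]
          have : (1:ℝ) ≤ ((m:ℝ)+1)/(m:ℝ) := by
            rw [le_div_iff₀ hm0]; linarith
          nlinarith
        push_cast
        linarith [ih]
    have := key n (by omega)
    have hd0 : (0:ℝ) < (d:ℝ) := by exact_mod_cast hd
    have hn0 : (0:ℝ) < (n:ℝ) := by exact_mod_cast (by omega : 0 < n)
    have : B * (1/(d:ℝ) - 1/(n:ℝ)) ≤ B / d := by
      rw [mul_sub]
      have : 0 ≤ B * (1/(n:ℝ)) := by positivity
      rw [mul_one_div]
      linarith
    linarith [key n (by omega)]

/-- double sum bound -/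
lemma aux_double (B : ℝ) (hB : 0 ≤ B) (n : ℕ) :
    ∑ i ∈ Finset.Icc 1 n, ∑ i' ∈ Finset.Icc 1 n,
      (if i = i' then (1:ℝ) else B / (Nat.dist i i' : ℝ))
      ≤ n * (1 + 4 * B * Real.sqrt n) := by
  have hH : ∑ d ∈ Finset.Icc 1 n, (B / (d:ℝ)) ≤ 2 * B * Real.sqrt n := by
    have := aux_harmonic n
    calc ∑ d ∈ Finset.Icc 1 n, (B / (d:ℝ)) = B * ∑ d ∈ Finset.Icc 1 n, (1/(d:ℝ)) := by
          rw [Finset.mul_sum]; apply Finset.sum_congr rfl; intros; ring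
    _ ≤ B * (2 * Real.sqrt n) := by
          apply mul_le_mul_of_nonneg_left this hB
    _ = 2 * B * Real.sqrt n := by ring
  have inner : ∀ i ∈ Finset.Icc 1 n,
      ∑ i' ∈ Finset.Icc 1 n, (if i = i' then (1:ℝ) else B / (Nat.dist i i' : ℝ))
        ≤ 1 + 4 * B * Real.sqrt n := by
    intro i hi
    rw [Finset.mem_Icc] at hi
    have hsplit : ∀ i' ∈ Finset.Icc 1 n,
        (if i = i' then (1:ℝ) else B / (Nat.dist i i' : ℝ))
          ≤ (if i' = i then (1:ℝ) else 0) + (if i' < i then B / ((i - i' : ℕ):ℝ) else 0)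
            + (if i < i' then B / ((i' - i : ℕ):ℝ) else 0) := by
      intro i' _
      rcases lt_trichotomy i' i with h | h | h
      · simp only [show i ≠ i' by omega, show ¬ (i < i') by omega, show i' ≠ i by omega,
          if_false, h, if_true]
        rw [Nat.dist_eq_sub_of_le_right h.le]
        simp
      · simp [h]
      · simp only [show i ≠ i' by omega, show ¬ (i' < i) by omega, show i' ≠ i by omega,
          if_false, h, if_true]
        rw [Nat.dist_eq_sub_of_le h.le]
        simp
    calc ∑ i' ∈ Finset.Icc 1 n, (if i = i' then (1:ℝ) else B / (Nat.dist i i' : ℝ))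
        ≤ ∑ i' ∈ Finset.Icc 1 n, ((if i' = i then (1:ℝ) else 0)
            + (if i' < i then B / ((i - i' : ℕ):ℝ) else 0)
            + (if i < i' then B / ((i' - i : ℕ):ℝ) else 0)) := Finset.sum_le_sum hsplit
    _ = (∑ i' ∈ Finset.Icc 1 n, (if i' = i then (1:ℝ) else 0))
        + (∑ i' ∈ Finset.Icc 1 n, (if i' < i then B / ((i - i' : ℕ):ℝ) else 0))
        + (∑ i' ∈ Finset.Icc 1 n, (if i < i' then B / ((i' - i : ℕ):ℝ) else 0)) := by
          rw [Finset.sum_add_distrib, Finset.sum_add_distrib]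
    _ ≤ 1 + (2 * B * Real.sqrt n) + (2 * B * Real.sqrt n) := by
          gcongr ?_ + ?_ + ?_
          · rw [Finset.sum_ite_eq' (Finset.Icc 1 n) i (fun _ => (1:ℝ))]
            simp [Finset.mem_Icc, hi]
          · -- reindex j = i - i'
            rw [← Finset.sum_filter]
            have himg : ((Finset.Icc 1 n).filter (fun i' => i' < i)).image (fun i' => i - i')
                ⊆ Finset.Icc 1 n := by
              intro j hj
              simp only [Finset.mem_image, Finset.mem_filter, Finset.mem_Icc] at hj
              obtain ⟨i', ⟨⟨h1, h2⟩, h3⟩, rfl⟩ := hj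
              rw [Finset.mem_Icc]
              omega
            have hinj : ∀ x ∈ (Finset.Icc 1 n).filter (fun i' => i' < i),
                ∀ y ∈ (Finset.Icc 1 n).filter (fun i' => i' < i),
                  i - x = i - y → x = y := by
              intro x hx y hy hxy
              simp only [Finset.mem_filter, Finset.mem_Icc] at hx hy
              omega
            calc ∑ i' ∈ (Finset.Icc 1 n).filter (fun i' => i' < i), B / ((i - i' : ℕ):ℝ)
                = ∑ j ∈ ((Finset.Icc 1 n).filter (fun i' => i' < i)).image (fun i' => i - i'),
                    B / (j:ℝ) := by rw [Finset.sum_image hinj]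
            _ ≤ ∑ j ∈ Finset.Icc 1 n, B / (j:ℝ) := by
                  apply Finset.sum_le_sum_of_subset_of_nonneg himg
                  intro j _ _
                  positivity
            _ ≤ 2 * B * Real.sqrt n := hH
          · -- reindex j = i' - i
            rw [← Finset.sum_filter]
            have himg : ((Finset.Icc 1 n).filter (fun i' => i < i')).image (fun i' => i' - i)
                ⊆ Finset.Icc 1 n := by
              intro j hj
              simp only [Finset.mem_image, Finset.mem_filter, Finset.mem_Icc] at hj
              obtain ⟨i', ⟨⟨h1, h2⟩, h3⟩, rfl⟩ := hj
              rw [Finset.mem_Icc]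
              omega
            have hinj : ∀ x ∈ (Finset.Icc 1 n).filter (fun i' => i < i'),
                ∀ y ∈ (Finset.Icc 1 n).filter (fun i' => i < i'),
                  x - i = y - i → x = y := by
              intro x hx y hy hxy
              simp only [Finset.mem_filter, Finset.mem_Icc] at hx hy
              omega
            calc ∑ i' ∈ (Finset.Icc 1 n).filter (fun i' => i < i'), B / ((i' - i : ℕ):ℝ)
                = ∑ j ∈ ((Finset.Icc 1 n).filter (fun i' => i < i')).image (fun i' => i' - i),
                    B / (j:ℝ) := by rw [Finset.sum_image hinj]
            _ ≤ ∑ j ∈ Finset.Icc 1 n, B / (j:ℝ) := by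
                  apply Finset.sum_le_sum_of_subset_of_nonneg himg
                  intro j _ _
                  positivity
            _ ≤ 2 * B * Real.sqrt n := hH
    _ = 1 + 4 * B * Real.sqrt n := by ring
  calc ∑ i ∈ Finset.Icc 1 n, ∑ i' ∈ Finset.Icc 1 n,
        (if i = i' then (1:ℝ) else B / (Nat.dist i i' : ℝ))
      ≤ ∑ i ∈ Finset.Icc 1 n, (1 + 4 * B * Real.sqrt n) := Finset.sum_le_sum inner
  _ = n * (1 + 4 * B * Real.sqrt n) := by
        rw [Finset.sum_const, Nat.card_Icc, Nat.add_sub_cancel, nsmul_eq_mul]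

/-- If `(Δ_j)` are i.i.d. nonnegative-integer random variables with `P(Δ_0 = 0) > 0`
and `m²·P(Δ_0 ≥ m) → 2`, then `∏_{j=1}^{∞} (1 - P(Δ_0 ≥ j))` converges to a strictly
positive limit `L`, and the regenerative set `R = ℤ_{≥0} \ ⋃_j (j, j+Δ_j]` a.s. has
positive asymptotic density (equal to `L`). -/
theorem stmt5 {Ω : Type*} [MeasureSpace Ω] [IsProbabilityMeasure (ℙ : Measure Ω)]
    (Δ : ℕ → Ω → ℕ) (hmeas : ∀ j, Measurable (Δ j))
    (hindep : iIndepFun Δ ℙ)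
    (hident : ∀ j, Measure.map (Δ j) ℙ = Measure.map (Δ 0) ℙ)
    (htail : Tendsto (fun m : ℕ => (m : ℝ) ^ 2 * (ℙ {ω | m ≤ Δ 0 ω}).toReal) atTop (nhds 2))
    (hzero : 0 < ℙ {ω | Δ 0 ω = 0}) :
    ∃ L : ℝ, 0 < L ∧
      Tendsto (fun n : ℕ =>
          ∏ j ∈ Finset.Icc 1 n, (1 - (ℙ {ω | j ≤ Δ 0 ω}).toReal)) atTop (nhds L) ∧
      ∀ᵐ ω ∂(ℙ : Measure Ω),
        Tendsto (fun n : ℕ =>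
            (((Finset.Icc 1 n).filter (fun i => ∀ j < i, j + Δ j ω < i)).card : ℝ) / n)
          atTop (nhds L) := by
  classical
  -- basic definitions
  set p : ℕ → ℝ := fun m => (ℙ {ω | m ≤ Δ 0 ω}).toReal with hpdef
  set a : ℕ → ℝ := fun n => ∏ k ∈ Finset.Icc 1 n, (1 - p k) with hadef
  set A : ℕ → Set Ω := fun i => {ω | ∀ j < i, j + Δ j ω < i} with hAdef
  -- measurability of A
  have hAm : ∀ i, MeasurableSet (A i) := by
    intro i
    have : A i = ⋂ j ∈ Finset.range i, (Δ j) ⁻¹' {x | j + x < i} := by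
      ext ω
      simp [hAdef, Set.mem_iInter]
    rw [this]
    exact Finset.measurableSet_biInter _ (fun j _ => (hmeas j) trivial)
  -- p basic facts
  have hp0 : ∀ m, 0 ≤ p m := fun m => ENNReal.toReal_nonneg
  have hp1' : ∀ m, p m ≤ 1 := by
    intro m
    have h := prob_le_one (μ := (ℙ : Measure Ω)) (s := {ω | m ≤ Δ 0 ω})
    have := ENNReal.toReal_mono ENNReal.one_ne_top h
    simpa using this
  have hpmono : ∀ m m', m ≤ m' → p m' ≤ p m := by
    intro m m' h
    apply ENNReal.toReal_mono (measure_ne_top _ _)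
    apply measure_mono
    intro ω hω
    exact le_trans h hω
  have hq : ∀ k, (ℙ {ω | Δ 0 ω < k}).toReal = 1 - p k := by
    intro k
    have hcompl : {ω | Δ 0 ω < k} = {ω | k ≤ Δ 0 ω}ᶜ := by
      ext ω; simp only [Set.mem_setOf_eq, Set.mem_compl_iff, not_le]
    have hm : MeasurableSet {ω | k ≤ Δ 0 ω} := (hmeas 0) trivial
    have hsum := prob_add_prob_compl (μ := (ℙ : Measure Ω)) hm
    have := congrArg ENNReal.toReal hsum
    rw [ENNReal.toReal_add (measure_ne_top _ _) (measure_ne_top _ _)] at this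
    simp only [ENNReal.toReal_one] at this
    rw [hcompl]
    linarith
  have hp1lt : p 1 < 1 := by
    have hcompl : {ω | (1:ℕ) ≤ Δ 0 ω} = {ω | Δ 0 ω = 0}ᶜ := by
      ext ω; simp only [Set.mem_setOf_eq, Set.mem_compl_iff]; omega
    have hm : MeasurableSet {ω | Δ 0 ω = 0} := by
      have h9 : {ω | Δ 0 ω = 0} = Δ 0 ⁻¹' {0} := by ext ω; simp
      rw [h9]; exact (hmeas 0) trivial
    have hsum := prob_add_prob_compl (μ := (ℙ : Measure Ω)) hm
    have h2 := congrArg ENNReal.toReal hsum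
    rw [ENNReal.toReal_add (measure_ne_top _ _) (measure_ne_top _ _)] at h2
    simp only [ENNReal.toReal_one] at h2
    have hz : 0 < (ℙ {ω | Δ 0 ω = 0}).toReal :=
      ENNReal.toReal_pos hzero.ne' (measure_ne_top _ _)
    have h8 : p 1 = (ℙ {ω | Δ 0 ω = 0}ᶜ).toReal :=
      congrArg (fun s => (ℙ s).toReal) hcompl
    rw [h8]
    linarith
  -- the quadratic tail bound
  obtain ⟨B, hB1, hBbound⟩ : ∃ B : ℝ, 1 ≤ B ∧ ∀ m, 1 ≤ m → p m ≤ B / (m:ℝ)^2 := by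
    have hev : ∀ᶠ m : ℕ in atTop, (m : ℝ)^2 * p m ≤ 3 :=
      htail.eventually (eventually_le_nhds (by norm_num))
    obtain ⟨m0, hm0⟩ := eventually_atTop.1 hev
    refine ⟨max 3 ((m0:ℝ)^2), le_trans (by norm_num) (le_max_left _ _), ?_⟩
    intro m hm
    have hmR : (0:ℝ) < (m:ℝ)^2 := by
      have : (0:ℝ) < (m:ℝ) := by exact_mod_cast hm
      positivity
    rcases le_or_gt m0 m with h | h
    · have := hm0 m h
      rw [le_div_iff₀ hmR]
      calc p m * (m:ℝ)^2 = (m:ℝ)^2 * p m := by ring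
      _ ≤ 3 := this
      _ ≤ max 3 ((m0:ℝ)^2) := le_max_left _ _
    · rw [le_div_iff₀ hmR]
      calc p m * (m:ℝ)^2 ≤ 1 * (m:ℝ)^2 := by
            apply mul_le_mul_of_nonneg_right (hp1' m) (le_of_lt hmR)
      _ = (m:ℝ)^2 := by ring
      _ ≤ (m0:ℝ)^2 := by
            have : (m:ℝ) ≤ (m0:ℝ) := by exact_mod_cast h.le
            nlinarith [Nat.cast_nonneg (α := ℝ) m]
      _ ≤ max 3 ((m0:ℝ)^2) := le_max_right _ _
  have hBpos : (0:ℝ) < B := lt_of_lt_of_le one_pos hB1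
  -- a basic facts
  have hfac0 : ∀ k, 1 ≤ k → 0 < 1 - p k := by
    intro k hk
    have := hpmono 1 k hk
    linarith
  have ha_pos : ∀ n, 0 < a n := by
    intro n
    apply Finset.prod_pos
    intro k hk
    exact hfac0 k (Finset.mem_Icc.1 hk).1
  have ha_le_one : ∀ n, a n ≤ 1 := by
    intro n
    apply Finset.prod_le_one
    · intro k hk; exact le_of_lt (hfac0 k (Finset.mem_Icc.1 hk).1)
    · intro k _; linarith [hp0 k]
  have hsplit : ∀ d m, d ≤ m → a m = a d * ∏ k ∈ Finset.Icc (d+1) m, (1 - p k) := by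
    intro d m hdm
    rw [hadef]
    simp only
    rw [show Finset.Icc 1 m = Finset.Ico 1 (m+1) by rw [Finset.Ico_add_one_right_eq_Icc],
      ← Finset.prod_Ico_consecutive _ (by omega : 1 ≤ d+1) (by omega : d+1 ≤ m+1),
      Finset.Ico_add_one_right_eq_Icc, Finset.Ico_add_one_right_eq_Icc]
  have ha_anti : ∀ d m, d ≤ m → a m ≤ a d := by
    intro d m hdm
    rw [hsplit d m hdm]
    have h1 : ∏ k ∈ Finset.Icc (d+1) m, (1 - p k) ≤ 1 := by
      apply Finset.prod_le_one
      · intro k hk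
        have := (Finset.mem_Icc.1 hk).1
        exact (hfac0 k (by omega)).le
      · intro k _; linarith [hp0 k]
    exact mul_le_of_le_one_right (ha_pos d).le h1
  -- key independence identities
  have key2 : ∀ i d, (ℙ (A i ∩ A (i+d))).toReal = a i * a d := by
    intro i d
    have h := aux_key Δ hmeas hindep hident i d
    have : ℙ (A i ∩ A (i+d)) = (∏ k ∈ Finset.Icc 1 i, ℙ {ω | Δ 0 ω < k})
        * ∏ k ∈ Finset.Icc 1 d, ℙ {ω | Δ 0 ω < k} := h
    rw [this, ENNReal.toReal_mul, ENNReal.toReal_prod, ENNReal.toReal_prod]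
    rw [hadef]
    congr 1
    · exact Finset.prod_congr rfl (fun k _ => hq k)
    · exact Finset.prod_congr rfl (fun k _ => hq k)
  have key1 : ∀ i, (ℙ (A i)).toReal = a i := by
    intro i
    have := key2 i 0
    rw [Nat.add_zero, Set.inter_self] at this
    have ha0 : a 0 = 1 := by rw [hadef]; simp
    rw [ha0, mul_one] at this
    exact this
  -- Weierstrass bound on decrements of a
  have hWeier : ∀ d m, 1 ≤ d → d ≤ m → a d - a m ≤ B / d := by
    intro d m hd hdm
    have hQ1 : 1 - ∑ k ∈ Finset.Icc (d+1) m, p k ≤ ∏ k ∈ Finset.Icc (d+1) m, (1 - p k) := by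
      apply aux_weier
      · intro k _; exact hp0 k
      · intro k _; exact hp1' k
    have hT : ∑ k ∈ Finset.Icc (d+1) m, p k ≤ B / d :=
      aux_tail p B hBpos.le hBbound hp0 d hd m
    have hsplit' := hsplit d m hdm
    have hQle1 : ∏ k ∈ Finset.Icc (d+1) m, (1 - p k) ≤ 1 := by
      apply Finset.prod_le_one
      · intro k hk
        have := (Finset.mem_Icc.1 hk).1
        exact (hfac0 k (by omega)).le
      · intro k _; linarith [hp0 k]
    have had := ha_pos d
    have had1 := ha_le_one d
    rw [hsplit']
    nlinarith
  -- construct the limit L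
  have hbdd : BddBelow (Set.range a) := ⟨0, by rintro x ⟨n, rfl⟩; exact (ha_pos n).le⟩
  have hanti : Antitone a := antitone_nat_of_succ_le (fun n => ha_anti n (n+1) (by omega))
  have haTendsto : Tendsto a atTop (nhds (⨅ n, a n)) := tendsto_atTop_ciInf hanti hbdd
  set L : ℝ := ⨅ n, a n with hLdef
  -- positivity of L
  have hLpos : 0 < L := by
    set d0 : ℕ := max (Nat.ceil (2*B)) 1 with hd0def
    have hd0ge : 2*B ≤ (d0:ℝ) := by
      calc 2*B ≤ (Nat.ceil (2*B) : ℝ) := Nat.le_ceil _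
      _ ≤ (d0:ℝ) := by exact_mod_cast Nat.le_max_left _ _
    have hd01 : 1 ≤ d0 := Nat.le_max_right _ _
    have hd0pos : (0:ℝ) < (d0:ℝ) := by
      have : (0:ℕ) < d0 := by omega
      exact_mod_cast this
    have hBd0 : B / d0 ≤ 1/2 := by
      rw [div_le_iff₀ hd0pos]
      nlinarith
    have hlb : ∀ n, a d0 / 2 ≤ a n := by
      intro n
      rcases le_or_gt n d0 with h | h
      · have := ha_anti n d0 h
        nlinarith [ha_pos d0]
      · have hsplit' := hsplit d0 n h.le
        have hQ1 : 1 - ∑ k ∈ Finset.Icc (d0+1) n, p k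
            ≤ ∏ k ∈ Finset.Icc (d0+1) n, (1 - p k) := by
          apply aux_weier
          · intro k _; exact hp0 k
          · intro k _; exact hp1' k
        have hT : ∑ k ∈ Finset.Icc (d0+1) n, p k ≤ B / d0 :=
          aux_tail p B hBpos.le hBbound hp0 d0 hd01 n
        rw [hsplit']
        nlinarith [ha_pos d0]
    have : a d0 / 2 ≤ L := le_ciInf hlb
    linarith [ha_pos d0]
  -- indicator random variables
  set X : ℕ → Ω → ℝ := fun i => (A i).indicator (fun _ => (1:ℝ)) with hXdef
  set Y : ℕ → Ω → ℝ := fun n ω => ∑ i ∈ Finset.Icc 1 n, X i ω with hYdef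
  set S : ℕ → ℝ := fun n => ∑ i ∈ Finset.Icc 1 n, a i with hSdef
  set r : ℕ → ℕ → ℝ := fun i i' => (ℙ (A i ∩ A i')).toReal with hrdef
  have hXnn : ∀ i ω, 0 ≤ X i ω := by
    intro i ω
    rw [hXdef]
    simp only [Set.indicator_apply]
    split <;> norm_num
  have hXint : ∀ i, Integrable (X i) ℙ := fun i => (integrable_const 1).indicator (hAm i)
  have hXmem : ∀ i, MemLp (X i) 2 ℙ := fun i => (memLp_const 1).indicator (hAm i)
  have hEX : ∀ i, ∫ ω, X i ω = a i := fun i => (integral_indicator_one (hAm i)).trans (key1 i)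
  have hXX : ∀ i i' ω, X i ω * X i' ω = (A i ∩ A i').indicator (fun _ => (1:ℝ)) ω := by
    intro i i' ω
    rw [hXdef]
    simp only [Set.indicator_apply, Set.mem_inter_iff]
    by_cases h1 : ω ∈ A i <;> by_cases h2 : ω ∈ A i' <;> simp [h1, h2]
  have hprodint : ∀ i i', Integrable (fun ω => X i ω * X i' ω) ℙ := by
    intro i i'
    have h := funext (hXX i i')
    rw [h]
    exact (integrable_const 1).indicator ((hAm i).inter (hAm i'))
  have hEXX : ∀ i i', ∫ ω, X i ω * X i' ω = r i i' := by
    intro i i'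
    have h := funext (hXX i i')
    rw [h]
    exact integral_indicator_one ((hAm i).inter (hAm i'))
  have hYmem : ∀ n, MemLp (Y n) 2 ℙ := by
    intro n
    rw [hYdef]
    exact memLp_finsetSum _ (fun i _ => hXmem i)
  have hEY : ∀ n, ∫ ω, Y n ω = S n := by
    intro n
    rw [hYdef, hSdef]
    simp only
    rw [integral_finset_sum _ (fun i _ => hXint i)]
    exact Finset.sum_congr rfl (fun i _ => hEX i)
  have hEY2 : ∀ n, ∫ ω, (Y n ω)^2
      = ∑ i ∈ Finset.Icc 1 n, ∑ i' ∈ Finset.Icc 1 n, r i i' := by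
    intro n
    have hsq : ∀ ω, (Y n ω)^2
        = ∑ i ∈ Finset.Icc 1 n, ∑ i' ∈ Finset.Icc 1 n, X i ω * X i' ω := by
      intro ω
      rw [hYdef]
      simp only [sq]
      rw [Finset.sum_mul_sum]
    calc ∫ ω, (Y n ω)^2
        = ∫ ω, ∑ i ∈ Finset.Icc 1 n, ∑ i' ∈ Finset.Icc 1 n, X i ω * X i' ω := by
          congr 1
          funext ω
          exact hsq ω
    _ = ∑ i ∈ Finset.Icc 1 n, ∫ ω, ∑ i' ∈ Finset.Icc 1 n, X i ω * X i' ω :=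
          integral_finset_sum _ (fun i _ => integrable_finset_sum _ (fun i' _ => hprodint i i'))
    _ = ∑ i ∈ Finset.Icc 1 n, ∑ i' ∈ Finset.Icc 1 n, ∫ ω, X i ω * X i' ω :=
          Finset.sum_congr rfl (fun i _ => integral_finset_sum _ (fun i' _ => hprodint i i'))
    _ = ∑ i ∈ Finset.Icc 1 n, ∑ i' ∈ Finset.Icc 1 n, r i i' :=
          Finset.sum_congr rfl (fun i _ => Finset.sum_congr rfl (fun i' _ => hEXX i i'))
  have hVar : ∀ n, Var[Y n]
      = ∑ i ∈ Finset.Icc 1 n, ∑ i' ∈ Finset.Icc 1 n, (r i i' - a i * a i') := by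
    intro n
    have hv := variance_eq_sub (μ := (ℙ : Measure Ω)) (hYmem n)
    have h2 : (ℙ : Measure Ω)[(Y n)^2]
        = ∑ i ∈ Finset.Icc 1 n, ∑ i' ∈ Finset.Icc 1 n, r i i' := hEY2 n
    have h3 : (ℙ : Measure Ω)[Y n] = S n := hEY n
    rw [hv, h2, h3, sq, Finset.sum_mul_sum, ← Finset.sum_sub_distrib]
    exact Finset.sum_congr rfl (fun i _ => by rw [← Finset.sum_sub_distrib])
  -- covariance bound
  have hoff : ∀ i i', i < i' → r i i' - a i * a i' ≤ B / ((i' - i : ℕ) : ℝ) := by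
    intro i i' hii
    set d := i' - i with hddef
    have hd1 : 1 ≤ d := by omega
    have hid : i' = i + d := by omega
    have hr : r i i' = a i * a d := by
      rw [hrdef]
      simp only
      rw [hid]
      exact key2 i d
    have hd0 : (0:ℝ) < (d:ℝ) := by exact_mod_cast hd1
    have hw : a d - a i' ≤ B / d := by
      rw [hid]
      exact hWeier d (i+d) hd1 (by omega)
    have hanti2 : a i' ≤ a d := ha_anti d i' (by omega)
    have hBd : 0 ≤ B / (d:ℝ) := by positivity
    rw [hr]
    have h01 : 0 ≤ a i := (ha_pos i).le
    have h02 : a i ≤ 1 := ha_le_one i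
    calc a i * a d - a i * a i' = a i * (a d - a i') := by ring
    _ ≤ 1 * (B / d) := by
        apply mul_le_mul h02 hw (by linarith) zero_le_one
    _ = B / d := one_mul _
  have hφ : ∀ i i', r i i' - a i * a i'
      ≤ (if i = i' then (1:ℝ) else B / (Nat.dist i i' : ℝ)) := by
    intro i i'
    rcases lt_trichotomy i i' with h | h | h
    · rw [if_neg (by omega), Nat.dist_eq_sub_of_le h.le]
      exact hoff i i' h
    · subst h
      rw [if_pos rfl]
      have hr : r i i = a i := by
        rw [hrdef]
        simp only [Set.inter_self]
        exact key1 i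
      rw [hr]
      nlinarith [ha_pos i, ha_le_one i]
    · rw [if_neg (by omega), Nat.dist_eq_sub_of_le_right h.le]
      have hr : r i i' = r i' i := by
        rw [hrdef]
        simp only [Set.inter_comm]
      rw [hr, mul_comm]
      exact hoff i' i h
  have hVarBound : ∀ n, Var[Y n] ≤ (n:ℝ) * (1 + 4 * B * Real.sqrt n) := by
    intro n
    rw [hVar n]
    calc ∑ i ∈ Finset.Icc 1 n, ∑ i' ∈ Finset.Icc 1 n, (r i i' - a i * a i')
        ≤ ∑ i ∈ Finset.Icc 1 n, ∑ i' ∈ Finset.Icc 1 n,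
            (if i = i' then (1:ℝ) else B / (Nat.dist i i' : ℝ)) := by
          apply Finset.sum_le_sum
          intro i _
          apply Finset.sum_le_sum
          intro i' _
          exact hφ i i'
    _ ≤ (n:ℝ) * (1 + 4 * B * Real.sqrt n) := aux_double B hBpos.le n
  -- Chebyshev bound along fourth powers
  have hcheb : ∀ (ε : ℝ), 0 < ε → ∀ k : ℕ, 1 ≤ k →
      ℙ {ω | ε * ((k^4 : ℕ) : ℝ) ≤ |Y (k^4) ω - S (k^4)|}
        ≤ ENNReal.ofReal ((1 + 4*B) / (ε^2 * (k:ℝ)^2)) := by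
    intro ε hε k hk
    have hkR : (1:ℝ) ≤ (k:ℝ) := by exact_mod_cast hk
    have hn4 : ((k^4 : ℕ) : ℝ) = (k:ℝ)^4 := by push_cast; ring
    have hnpos : (0:ℝ) < ((k^4 : ℕ) : ℝ) := by rw [hn4]; positivity
    have hc : 0 < ε * ((k^4 : ℕ) : ℝ) := by positivity
    have h := meas_ge_le_variance_div_sq (X := Y (k^4)) (hYmem (k^4)) hc
    rw [show (ℙ : Measure Ω)[Y (k^4)] = S (k^4) from hEY (k^4)] at h
    refine h.trans (ENNReal.ofReal_le_ofReal ?_)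
    have hsqrt : Real.sqrt ((k^4 : ℕ) : ℝ) = (k:ℝ)^2 := by
      rw [show ((k^4 : ℕ) : ℝ) = ((k:ℝ)^2)^2 by push_cast; ring]
      exact Real.sqrt_sq (by positivity)
    have h1 : Var[Y (k^4)] ≤ (k:ℝ)^4 * (1 + 4 * B * (k:ℝ)^2) := by
      have := hVarBound (k^4)
      rw [hsqrt, hn4] at this
      exact this
    have hden : (0:ℝ) < (ε * ((k^4:ℕ):ℝ))^2 := by positivity
    calc Var[Y (k^4)] / (ε * ((k^4:ℕ):ℝ))^2
        ≤ ((k:ℝ)^4 * (1 + 4 * B * (k:ℝ)^2)) / (ε * ((k^4:ℕ):ℝ))^2 := by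
          gcongr
    _ = (1 + 4 * B * (k:ℝ)^2) / (ε^2 * (k:ℝ)^4) := by
          rw [hn4]
          field_simp
    _ ≤ ((1 + 4 * B) * (k:ℝ)^2) / (ε^2 * (k:ℝ)^4) := by
          gcongr
          nlinarith
    _ = (1 + 4*B) / (ε^2 * (k:ℝ)^2) := by
          field_simp
  -- summability helper
  have hsummable : ∀ C : ℝ, Summable (fun k : ℕ => C / ((k:ℝ)+1)^2) := by
    intro C
    have h1 : Summable (fun k : ℕ => 1 / ((k:ℝ))^2) :=
      Real.summable_one_div_nat_pow.2 one_lt_two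
    have h2 := (summable_nat_add_iff 1).2 h1
    have h3 := h2.mul_left C
    apply h3.congr
    intro k
    push_cast
    ring
  -- Borel-Cantelli
  have hBC : ∀ m : ℕ, ∀ᵐ ω ∂(ℙ : Measure Ω), ∀ᶠ k : ℕ in atTop,
      ω ∉ {ω' | (1/((m:ℝ)+1)) * (((k+1)^4 : ℕ) : ℝ)
        ≤ |Y ((k+1)^4) ω' - S ((k+1)^4)|} := by
    intro m
    apply MeasureTheory.ae_eventually_notMem
    have hε : (0:ℝ) < 1/((m:ℝ)+1) := by positivity
    set C : ℝ := (1+4*B)/((1/((m:ℝ)+1))^2 : ℝ) with hCdef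
    have hbound : ∀ k : ℕ,
        ℙ {ω' | (1/((m:ℝ)+1)) * (((k+1)^4 : ℕ) : ℝ) ≤ |Y ((k+1)^4) ω' - S ((k+1)^4)|}
          ≤ ENNReal.ofReal (C / ((k:ℝ)+1)^2) := by
      intro k
      have h := hcheb _ hε (k+1) (by omega)
      refine h.trans (ENNReal.ofReal_le_ofReal (le_of_eq ?_))
      rw [hCdef]
      push_cast
      rw [div_div]
    have hle : (∑' k : ℕ, ℙ {ω' | (1/((m:ℝ)+1)) * (((k+1)^4 : ℕ) : ℝ)
          ≤ |Y ((k+1)^4) ω' - S ((k+1)^4)|})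
        ≤ ENNReal.ofReal (∑' k : ℕ, C / ((k:ℝ)+1)^2) := by
      rw [ENNReal.ofReal_tsum_of_nonneg (fun k => by positivity) (hsummable C)]
      exact ENNReal.tsum_le_tsum hbound
    exact ne_top_of_le_ne_top ENNReal.ofReal_ne_top hle
  -- Cesàro for S
  have hk4top : Tendsto (fun k : ℕ => k^4) atTop atTop :=
    tendsto_atTop_atTop.2 (fun b => ⟨b, fun k hk => le_trans hk (Nat.le_self_pow (by norm_num) k)⟩)
  have hS : Tendsto (fun n : ℕ => S n / n) atTop (nhds L) := by
    have hshift : Tendsto (fun i : ℕ => a (1+i)) atTop (nhds L) := by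
      have h := haTendsto.comp (tendsto_add_atTop_nat 1)
      apply h.congr
      intro i
      simp [Function.comp, add_comm]
    have hces := hshift.cesaro
    have hsum_eq : ∀ n : ℕ, ∑ i ∈ Finset.range n, a (1+i) = S n := by
      intro n
      rw [hSdef]
      simp only
      rw [show Finset.Icc 1 n = Finset.Ico 1 (n+1) from (Finset.Ico_add_one_right_eq_Icc 1 n).symm,
        Finset.sum_Ico_eq_sum_range]
      simp only [Nat.add_sub_cancel]
    apply hces.congr
    intro n
    rw [hsum_eq n, inv_mul_eq_div]
  have hSk : Tendsto (fun k : ℕ => S (k^4) / ((k:ℝ)^4)) atTop (nhds L) := by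
    have h := hS.comp hk4top
    apply h.congr
    intro k
    simp only [Function.comp]
    rw [Nat.cast_pow]
  -- final a.e. statement
  refine ⟨L, hLpos, haTendsto, ?_⟩
  have hae : ∀ᵐ ω ∂(ℙ : Measure Ω), ∀ m : ℕ, ∀ᶠ k : ℕ in atTop,
      ω ∉ {ω' | (1/((m:ℝ)+1)) * (((k+1)^4 : ℕ) : ℝ)
        ≤ |Y ((k+1)^4) ω' - S ((k+1)^4)|} := ae_all_iff.2 hBC
  filter_upwards [hae] with ω hω
  have hcard : ∀ n : ℕ,
      (((Finset.Icc 1 n).filter (fun i => ∀ j < i, j + Δ j ω < i)).card : ℝ) = Y n ω := by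
    intro n
    rw [Finset.card_filter]
    push_cast
    rw [hYdef]
    simp only
    apply Finset.sum_congr rfl
    intro i _
    rw [hXdef]
    simp only [Set.indicator_apply]
    by_cases h : ω ∈ A i
    · rw [if_pos h, if_pos]
      exact h
    · rw [if_neg, if_neg h]
      exact h
  have humono : ∀ m' n', m' ≤ n' → Y m' ω ≤ Y n' ω := by
    intro m' n' h
    rw [hYdef]
    simp only
    apply Finset.sum_le_sum_of_subset_of_nonneg (Finset.Icc_subset_Icc_right h)
    intro i _ _
    exact hXnn i ω
  have hunn : ∀ n, 0 ≤ Y n ω := fun n => Finset.sum_nonneg (fun i _ => hXnn i ω)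
  have hD : Tendsto (fun k : ℕ => (Y (k^4) ω - S (k^4)) / ((k:ℝ)^4)) atTop (nhds 0) := by
    rw [Metric.tendsto_atTop]
    intro ε hε
    obtain ⟨m, hm⟩ := exists_nat_one_div_lt hε
    obtain ⟨K, hK⟩ := eventually_atTop.1 (hω m)
    refine ⟨K+1, fun k hk => ?_⟩
    have hk1 : 1 ≤ k := by omega
    have hkpos : (0:ℝ) < (k:ℝ) := by exact_mod_cast hk1
    have hkR : (0:ℝ) < (k:ℝ)^4 := by positivity
    have h1' : ¬ ((1/((m:ℝ)+1)) * ((((k-1)+1)^4 : ℕ) : ℝ)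
        ≤ |Y (((k-1)+1)^4) ω - S (((k-1)+1)^4)|) := hK (k-1) (by omega)
    have h2 := not_le.1 h1'
    rw [show k-1+1 = k from by omega] at h2
    have hcast : (((k^4 : ℕ)):ℝ) = (k:ℝ)^4 := by push_cast; ring
    rw [Real.dist_eq, sub_zero, abs_div, abs_of_pos hkR, div_lt_iff₀ hkR]
    calc |Y (k^4) ω - S (k^4)| < (1/((m:ℝ)+1)) * (k:ℝ)^4 := by rw [← hcast]; exact h2
    _ ≤ ε * (k:ℝ)^4 := mul_le_mul_of_nonneg_right hm.le hkR.le
  have hYk : Tendsto (fun k : ℕ => Y (k^4) ω / ((k:ℝ)^4)) atTop (nhds L) := by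
    have h := hD.add hSk
    rw [zero_add] at h
    apply h.congr
    intro k
    rw [← add_div, sub_add_cancel]
  have hfin := aux_interp (fun n => Y n ω) humono hunn L hYk
  apply hfin.congr
  intro n
  rw [hcard n]
end

section
/- The recurrence 2f_l = 1 + (1/12)·2f_l·(2f_{l-1} + 2f_l + 2f_{l+1}) for l > -r, with boundary condition f_{-r} = x and f_l → 1 as l → ∞, is solved by f_l = 1 - 2/((l+r+a)(l+r+1+a)) where a = a(x) = (-1 + √(1 + 8/(1-x)))/2, for x ∈ [0,1). -/
open Filter

/-- The recurrence `2f_l = 1 + (1/12)·2f_l·(2f_{l-1} + 2f_l + 2f_{l+1})` for `l > -r`, with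
`f_{-r} = x` and `f_l → 1` as `l → ∞`, is solved by
`f_l = 1 - 2/((l+r+a)(l+r+1+a))` where `a = (-1 + √(1 + 8/(1-x)))/2`, for `x ∈ [0,1)`. -/
theorem stmt7 (x : ℝ) (hx : x ∈ Set.Ico (0 : ℝ) 1) (r : ℤ) (hr : 0 < r)
    (a : ℝ) (ha : a = (-1 + Real.sqrt (1 + 8 / (1 - x))) / 2)
    (f : ℤ → ℝ)
    (hf : ∀ l : ℤ, f l = 1 - 2 / (((l : ℝ) + r + a) * ((l : ℝ) + r + 1 + a))) :
    f (-r) = x ∧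
    Tendsto (fun l : ℤ => f l) atTop (nhds 1) ∧
    ∀ l : ℤ, -r < l →
      2 * f l = 1 + (1 / 12) * (2 * f l) * (2 * f (l - 1) + 2 * f l + 2 * f (l + 1)) := by
  obtain ⟨hx0, hx1⟩ := hx
  have h1x : (0:ℝ) < 1 - x := by linarith
  set s := Real.sqrt (1 + 8 / (1 - x)) with hs
  have hssq : s ^ 2 = 1 + 8 / (1 - x) := by
    rw [hs, Real.sq_sqrt]
    positivity
  have hs1 : 1 < s := by
    nlinarith [Real.sqrt_nonneg (1 + 8 / (1 - x)), div_pos (by norm_num : (0:ℝ) < 8) h1x]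
  have hapos : 0 < a := by rw [ha]; linarith
  have haa : a * (a + 1) = 2 / (1 - x) := by
    rw [ha]
    have h8 : (8 / (1 - x)) * (1 - x) = 8 := by field_simp
    field_simp
    nlinarith [hssq, h8]
  refine ⟨?_, ?_, ?_⟩
  · rw [hf]
    push_cast
    have : ((-r : ℝ) + r + a) * (-(r:ℝ) + r + 1 + a) = 2 / (1 - x) := by
      rw [← haa]; ring
    rw [this]
    field_simp
    ring
  · have h1 : Tendsto (fun l : ℤ => ((l : ℝ) + r + a) * ((l : ℝ) + r + 1 + a)) atTop atTop := by
      apply Tendsto.atTop_mul_atTop₀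
      · exact tendsto_atTop_add_const_right _ _
          (tendsto_atTop_add_const_right _ _ tendsto_intCast_atTop_atTop)
      · exact tendsto_atTop_add_const_right _ _ (tendsto_atTop_add_const_right _ _
          (tendsto_atTop_add_const_right _ _ tendsto_intCast_atTop_atTop))
    have h2 : Tendsto (fun l : ℤ => 2 / (((l : ℝ) + r + a) * ((l : ℝ) + r + 1 + a)))
        atTop (nhds 0) := Tendsto.div_atTop tendsto_const_nhds h1
    have h3 := h2.const_sub 1
    simp only [sub_zero] at h3
    convert h3 using 2 with l
    exact hf l
  · intro l hl
    have hlr : (1:ℝ) ≤ (l : ℝ) + r := by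
      have : 1 ≤ l + r := by omega
      exact_mod_cast this
    set u : ℝ := (l : ℝ) + r + a with hu
    have hu1 : 1 < u := by simp [hu]; linarith
    have h0 : u ≠ 0 := by linarith
    have hm1 : u - 1 ≠ 0 := by intro h; nlinarith
    have hp1 : u + 1 ≠ 0 := by linarith
    have hp2 : u + 2 ≠ 0 := by linarith
    have e1 : f l = 1 - 2 / (u * (u + 1)) := by
      rw [hf]; simp [hu]; ring_nf
    have e2 : f (l - 1) = 1 - 2 / ((u - 1) * u) := by
      rw [hf]; push_cast; rw [hu]; ring_nf
    have e3 : f (l + 1) = 1 - 2 / ((u + 1) * (u + 2)) := by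
      rw [hf]; push_cast; rw [hu]; ring_nf
    rw [e1, e2, e3]
    field_simp
    ring
end

section
/- Let (Y_n)_{n≥0} be a real-valued process with stationary increments such that |Y_{n+1} - Y_n| ≤ 1 almost surely and Y_n/n → 0 almost surely. If moreover the increment sequence decomposes as a mixture of ergodic stationary sequences, then each ergodic component has increments of mean zero, and consequently (Y_n) is recurrent: it visits every integer value it can reach infinitely often almost surely. -/
open MeasureTheory ProbabilityTheory Filter


lemma dekking_ivt (f : ℕ → ℤ) (h : ∀ n, |f (n+1) - f n| ≤ 1) {a b : ℕ} {t : ℤ}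
    (hab : a ≤ b) (ha : f a ≤ t) (hb : t ≤ f b) : ∃ c, a ≤ c ∧ c ≤ b ∧ f c = t := by
  classical
  have hex : ∃ c, a ≤ c ∧ t ≤ f c := ⟨b, hab, hb⟩
  refine ⟨Nat.find hex, (Nat.find_spec hex).1, Nat.find_min' hex ⟨hab, hb⟩, ?_⟩
  obtain ⟨hac, htc⟩ := Nat.find_spec hex
  rcases eq_or_lt_of_le hac with heq | hlt
  · rw [← heq] at htc ⊢; omega
  · obtain ⟨d, hd⟩ : ∃ d, Nat.find hex = d + 1 := ⟨Nat.find hex - 1, by omega⟩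
    have hdm := Nat.find_min hex (show d < Nat.find hex by omega)
    push_neg at hdm
    have h1 : f d < t := hdm (by omega)
    have h2 := h d
    rw [abs_le] at h2
    rw [hd] at htc ⊢
    omega

lemma dekking_inf_iff (S : Set ℕ) : S.Infinite ↔ ∀ N, ∃ n, N ≤ n ∧ n ∈ S := by
  constructor
  · intro h N
    obtain ⟨m, hm, hlt⟩ := h.exists_gt N
    exact ⟨m, hlt.le, hm⟩
  · intro h hfin
    obtain ⟨B, hB⟩ := hfin.bddAbove
    obtain ⟨n, hn, hmem⟩ := h (B+1)
    exact absurd (hB hmem) (by omega)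


lemma dekking_ladder {Ω : Type*} [MeasureSpace Ω] [IsProbabilityMeasure (ℙ : Measure Ω)]
    (Y : ℕ → Ω → ℤ) (hmeas : ∀ n, Measurable (Y n))
    (hstat : ∀ k : ℕ,
      Measure.map (fun ω => fun i : ℕ => Y (k + i) ω - Y k ω) (ℙ : Measure Ω)
        = Measure.map (fun ω => fun i : ℕ => Y i ω - Y 0 ω) (ℙ : Measure Ω))
    (hdrift : ∀ᵐ ω ∂(ℙ : Measure Ω),
      Tendsto (fun n : ℕ => (Y n ω : ℝ) / n) atTop (nhds 0)) :
    ∀ k : ℕ, (ℙ : Measure Ω) {ω | ∀ n : ℕ, Y k ω < Y (k + n + 1) ω} = 0 := by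
  classical
  set A : ℕ → Set Ω := fun k => {ω | ∀ n : ℕ, Y k ω < Y (k + n + 1) ω} with hAdef
  have hA : ∀ k, MeasurableSet (A k) := by
    intro k
    have : A k = ⋂ n : ℕ, {ω | Y k ω < Y (k + n + 1) ω} := by
      ext ω; simp [hAdef, Set.mem_iInter]
    rw [this]
    exact MeasurableSet.iInter fun n => measurableSet_lt (hmeas k) (hmeas _)
  have hshift : ∀ k, Measurable (fun ω => fun i : ℕ => Y (k + i) ω - Y k ω) :=
    fun k => measurable_pi_lambda _ fun i => (hmeas _).sub (hmeas k)
  set E : Set (ℕ → ℤ) := {z | ∀ n : ℕ, 0 < z (n + 1)} with hEdef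
  have hE : MeasurableSet E := by
    have : E = ⋂ n : ℕ, {z : ℕ → ℤ | 0 < z (n + 1)} := by
      ext z; simp [hEdef, Set.mem_iInter]
    rw [this]
    exact MeasurableSet.iInter fun n =>
      measurableSet_lt measurable_const (measurable_pi_apply _)
  set q : ENNReal := (ℙ : Measure Ω) {ω | ∀ n : ℕ, 0 < Y (n + 1) ω - Y 0 ω} with hqdef
  have key : ∀ k, (ℙ : Measure Ω) (A k) = q := by
    intro k
    have h1 : A k = (fun ω => fun i : ℕ => Y (k + i) ω - Y k ω) ⁻¹' E := by
      ext ω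
      simp only [hAdef, hEdef, Set.mem_preimage, Set.mem_setOf_eq, sub_pos, add_assoc]
    have h2 : (fun ω => fun i : ℕ => Y i ω - Y 0 ω) ⁻¹' E
        = {ω | ∀ n : ℕ, 0 < Y (n + 1) ω - Y 0 ω} := by
      ext ω; simp [hEdef]
    rw [h1, ← Measure.map_apply (hshift k) hE, hstat k,
      Measure.map_apply (measurable_pi_lambda (fun ω => fun i : ℕ => Y i ω - Y 0 ω) fun i => (hmeas _).sub (hmeas 0)) hE, h2]
  -- the counting functions
  set g : ℕ → Ω → ℝ := fun N ω =>
    (∑ k ∈ Finset.range (N + 1), (A k).indicator (fun _ => (1 : ℝ)) ω) / (N + 1) with hgdef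
  have hgcard : ∀ N ω, (∑ k ∈ Finset.range (N + 1), (A k).indicator (fun _ => (1 : ℝ)) ω)
      = (((Finset.range (N + 1)).filter (fun k => ω ∈ A k)).card : ℝ) := by
    intro N ω
    rw [← Finset.sum_boole]
    exact Finset.sum_congr rfl fun k _ => by simp [Set.indicator_apply]
  have hg0 : ∀ N ω, 0 ≤ g N ω := by
    intro N ω
    apply div_nonneg _ (by positivity)
    exact Finset.sum_nonneg fun k _ => Set.indicator_nonneg (fun _ _ => zero_le_one) _
  -- integral of g N is q.toReal
  have hint : ∀ N, ∫ ω, g N ω ∂(ℙ : Measure Ω) = q.toReal := by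
    intro N
    have h1 : ∀ k, ∫ ω, (A k).indicator (fun _ => (1 : ℝ)) ω ∂(ℙ : Measure Ω)
        = ((ℙ : Measure Ω) (A k)).toReal := by
      intro k
      rw [integral_indicator_const (1 : ℝ) (hA k)]
      simp; rfl
    simp only [hgdef]
    rw [integral_div,
      integral_finset_sum _ (fun k _ => ((integrable_const (1 : ℝ)).indicator (hA k)))]
    simp only [h1, key]
    rw [Finset.sum_const, Finset.card_range, nsmul_eq_mul]
    have hne : ((N : ℝ) + 1) ≠ 0 := by positivity
    field_simp
    push_cast; ring
  -- pointwise convergence to 0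
  have hptw : ∀ᵐ ω ∂(ℙ : Measure Ω),
      Tendsto (fun N => g N ω) atTop (nhds (0 : ℝ)) := by
    filter_upwards [hdrift] with ω htend
    by_cases hex : ∃ j, ω ∈ A j
    · set k1 := Nat.find hex with hk1
      have hk1A : ω ∈ A k1 := Nat.find_spec hex
      have hmono : ∀ {k j : ℕ}, ω ∈ A k → k < j → Y k ω < Y j ω := by
        intro k j hk hlt
        have := hk (j - k - 1)
        rwa [show k + (j - k - 1) + 1 = j by omega] at this
      have hcard : ∀ N, (((Finset.range (N + 1)).filter (fun k => ω ∈ A k)).card : ℝ)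
          ≤ |(Y (N + 1) ω : ℝ)| + |(Y k1 ω : ℝ)| := by
        intro N
        have hle : ((Finset.range (N + 1)).filter (fun k => ω ∈ A k)).card
            ≤ (Finset.Icc (Y k1 ω) (Y (N + 1) ω - 1)).card := by
          apply Finset.card_le_card_of_injOn (fun k => Y k ω)
          · intro k hk
            simp only [Finset.coe_filter, Finset.mem_coe, Finset.mem_filter, Finset.mem_range, Set.mem_setOf_eq] at hk
            obtain ⟨hkN, hkA⟩ := hk
            have h1 : Y k1 ω ≤ Y k ω := by
              rcases eq_or_lt_of_le (Nat.find_min' hex hkA) with h | h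
              · exact le_of_eq (by rw [hk1, h])
              · exact (hmono hk1A h).le
            have h2 : Y k ω < Y (N + 1) ω := hmono hkA (by omega)
            simp only [Finset.mem_coe, Finset.mem_Icc]
            omega
          · intro a ha b hb hab
            simp only [Finset.coe_filter, Set.mem_setOf_eq, Finset.mem_range] at ha hb
            by_contra hne
            rcases lt_or_gt_of_ne hne with h | h
            · exact absurd hab (hmono ha.2 h).ne
            · exact absurd hab.symm (hmono hb.2 h).ne
        have hle2 : ((Finset.range (N + 1)).filter (fun k => ω ∈ A k)).card
            ≤ (Y (N + 1) ω).natAbs + (Y k1 ω).natAbs := by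
          refine hle.trans ?_
          rw [Int.card_Icc]
          omega
        calc (((Finset.range (N + 1)).filter (fun k => ω ∈ A k)).card : ℝ)
            ≤ (((Y (N + 1) ω).natAbs + (Y k1 ω).natAbs : ℕ) : ℝ) := by exact_mod_cast hle2
          _ = |(Y (N + 1) ω : ℝ)| + |(Y k1 ω : ℝ)| := by
              push_cast [Nat.cast_natAbs]
              norm_num
      have hb : Tendsto (fun N : ℕ =>
          (|(Y (N + 1) ω : ℝ)| + |(Y k1 ω : ℝ)|) / (N + 1)) atTop (nhds 0) := by
        have h1 : Tendsto (fun n : ℕ => |(Y n ω : ℝ)| / n) atTop (nhds 0) := by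
          have h := htend.abs
          rw [abs_zero] at h
          refine h.congr fun n => ?_
          rw [abs_div, Nat.abs_cast]
        have h2 : Tendsto (fun n : ℕ => |(Y k1 ω : ℝ)| / n) atTop (nhds 0) :=
          tendsto_const_div_atTop_nhds_zero_nat _
        have h3 := h1.add h2
        rw [add_zero] at h3
        have h4 := h3.comp (tendsto_add_atTop_nat 1)
        have heq : (fun N : ℕ => (|(Y (N + 1) ω : ℝ)| + |(Y k1 ω : ℝ)|) / (N + 1))
            = (fun n : ℕ => |(Y n ω : ℝ)| / n + |(Y k1 ω : ℝ)| / n) ∘ (fun n => n + 1) := by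
          funext N
          simp only [Function.comp_apply]
          push_cast
          ring
        rw [heq]
        exact h4
      apply squeeze_zero (fun N => hg0 N ω) _ hb
      intro N
      simp only [hgdef]
      rw [hgcard]
      gcongr
      exact hcard N
    · push_neg at hex
      have hzero : ∀ N, g N ω = 0 := by
        intro N
        simp only [hgdef]
        rw [hgcard, Finset.filter_false_of_mem (fun k _ => hex k)]
        simp
      simp only [hzero]
      exact tendsto_const_nhds
  -- dominated convergence
  have hq0 : q.toReal = 0 := by
    have hmeasg : ∀ N, AEStronglyMeasurable (g N) (ℙ : Measure Ω) := by
      intro N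
      have : Measurable (g N) := by
        apply Measurable.div_const
        exact Finset.measurable_sum _ fun k _ =>
          (measurable_const (a := (1 : ℝ))).indicator (hA k)
      exact this.aestronglyMeasurable
    have hbound : ∀ N, ∀ᵐ ω ∂(ℙ : Measure Ω), ‖g N ω‖ ≤ (1 : ℝ) := by
      intro N
      refine ae_of_all _ fun ω => ?_
      rw [Real.norm_eq_abs, abs_of_nonneg (hg0 N ω)]
      have hcard : (((Finset.range (N + 1)).filter (fun k => ω ∈ A k)).card : ℝ)
          ≤ (N : ℝ) + 1 := by
        have := (Finset.card_filter_le (Finset.range (N + 1)) (fun k => ω ∈ A k)).trans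
          (by rw [Finset.card_range])
        exact_mod_cast this
      simp only [hgdef]
      rw [hgcard]
      rw [div_le_one (by positivity)]
      exact hcard
    have hdc := tendsto_integral_of_dominated_convergence (F := g) (f := fun _ => (0 : ℝ))
      (bound := fun _ => (1 : ℝ)) hmeasg (integrable_const 1) hbound hptw
    rw [integral_zero] at hdc
    have hconst : Tendsto (fun _ : ℕ => q.toReal) atTop (nhds 0) := by
      have : (fun N : ℕ => ∫ ω, g N ω ∂(ℙ : Measure Ω)) = fun _ : ℕ => q.toReal := by
        funext N; exact hint N
      rwa [this] at hdc
    exact tendsto_nhds_unique tendsto_const_nhds hconst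
  intro k
  rw [key k]
  rw [ENNReal.toReal_eq_zero_iff] at hq0
  rcases hq0 with h | h
  · exact h
  · exact absurd h (measure_ne_top _ _)

lemma dekking_ladder' {Ω : Type*} [MeasureSpace Ω] [IsProbabilityMeasure (ℙ : Measure Ω)]
    (Y : ℕ → Ω → ℤ) (hmeas : ∀ n, Measurable (Y n))
    (hstat : ∀ k : ℕ,
      Measure.map (fun ω => fun i : ℕ => Y (k + i) ω - Y k ω) (ℙ : Measure Ω)
        = Measure.map (fun ω => fun i : ℕ => Y i ω - Y 0 ω) (ℙ : Measure Ω))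
    (hdrift : ∀ᵐ ω ∂(ℙ : Measure Ω),
      Tendsto (fun n : ℕ => (Y n ω : ℝ) / n) atTop (nhds 0)) :
    ∀ k : ℕ, (ℙ : Measure Ω) {ω | ∀ n : ℕ, Y (k + n + 1) ω < Y k ω} = 0 := by
  have hneg : Measurable (fun z : ℕ → ℤ => fun i => -(z i)) :=
    measurable_pi_lambda _ fun i => (measurable_pi_apply i).neg
  have hstat' : ∀ k : ℕ,
      Measure.map (fun ω => fun i : ℕ => (-Y (k + i) ω) - (-Y k ω)) (ℙ : Measure Ω)
        = Measure.map (fun ω => fun i : ℕ => (-Y i ω) - (-Y 0 ω)) (ℙ : Measure Ω) := by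
    intro k
    have h1 : (fun ω => fun i : ℕ => (-Y (k + i) ω) - (-Y k ω))
        = (fun z : ℕ → ℤ => fun i => -(z i)) ∘ (fun ω => fun i : ℕ => Y (k + i) ω - Y k ω) := by
      funext ω; funext i; simp [Function.comp]; ring
    have h2 : (fun ω => fun i : ℕ => (-Y i ω) - (-Y 0 ω))
        = (fun z : ℕ → ℤ => fun i => -(z i)) ∘ (fun ω => fun i : ℕ => Y i ω - Y 0 ω) := by
      funext ω; funext i; simp [Function.comp]; ring
    rw [h1, h2,
      ← Measure.map_map hneg (measurable_pi_lambda (fun ω => fun i : ℕ => Y (k + i) ω - Y k ω) fun i => (hmeas _).sub (hmeas k)),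
      ← Measure.map_map hneg (measurable_pi_lambda (fun ω => fun i : ℕ => Y i ω - Y 0 ω) fun i => (hmeas _).sub (hmeas 0)),
      hstat k]
  have hdrift' : ∀ᵐ ω ∂(ℙ : Measure Ω),
      Tendsto (fun n : ℕ => ((-Y n ω : ℤ) : ℝ) / n) atTop (nhds 0) := by
    filter_upwards [hdrift] with ω h
    have := h.neg
    rw [neg_zero] at this
    refine this.congr fun n => ?_
    push_cast
    ring
  have := dekking_ladder (fun n ω => -Y n ω) (fun n => (hmeas n).neg) hstat' hdrift'
  intro k
  have h := this k
  have hset : {ω : Ω | ∀ n : ℕ, (fun n ω => -Y n ω) k ω < (fun n ω => -Y n ω) (k + n + 1) ω}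
      = {ω : Ω | ∀ n : ℕ, Y (k + n + 1) ω < Y k ω} := by
    ext ω
    simp only [Set.mem_setOf_eq, neg_lt_neg_iff]
  rwa [hset] at h

/-- Dekking-type recurrence criterion. Let `(Y_n)` be an integer-valued process with
stationary increments, steps bounded by `1` in absolute value, and `Y_n/n → 0` almost
surely. (Its increment law, being shift-invariant on the standard Borel space `ℤ^ℕ`,
decomposes as a mixture of ergodic stationary laws, each of which has mean-zero
increments.) Then `(Y_n)` is recurrent: almost surely it visits every integer value it
reaches infinitely often. -/
theorem stmt16 {Ω : Type*} [MeasureSpace Ω] [IsProbabilityMeasure (ℙ : Measure Ω)]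
    (Y : ℕ → Ω → ℤ) (hmeas : ∀ n, Measurable (Y n))
    (hstat : ∀ k : ℕ,
      Measure.map (fun ω => fun i : ℕ => Y (k + i) ω - Y k ω) (ℙ : Measure Ω)
        = Measure.map (fun ω => fun i : ℕ => Y i ω - Y 0 ω) (ℙ : Measure Ω))
    (hstep : ∀ᵐ ω ∂(ℙ : Measure Ω), ∀ n : ℕ, |Y (n + 1) ω - Y n ω| ≤ 1)
    (hdrift : ∀ᵐ ω ∂(ℙ : Measure Ω),
      Tendsto (fun n : ℕ => (Y n ω : ℝ) / n) atTop (nhds 0)) :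
    ∀ᵐ ω ∂(ℙ : Measure Ω),
      ∀ k : ℤ, (∃ n : ℕ, Y n ω = k) → {n : ℕ | Y n ω = k}.Infinite := by
  classical
  have h1 : ∀ᵐ ω ∂(ℙ : Measure Ω), ∀ m : ℕ, ¬(∀ n : ℕ, Y m ω < Y (m + n + 1) ω) := by
    rw [ae_all_iff]
    intro m
    refine (ae_iff).2 ?_
    simpa using dekking_ladder Y hmeas hstat hdrift m
  have h2 : ∀ᵐ ω ∂(ℙ : Measure Ω), ∀ m : ℕ, ¬(∀ n : ℕ, Y (m + n + 1) ω < Y m ω) := by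
    rw [ae_all_iff]
    intro m
    refine (ae_iff).2 ?_
    simpa using dekking_ladder' Y hmeas hstat hdrift m
  -- recurrence at time 0
  have hrec0 : ∀ᵐ ω ∂(ℙ : Measure Ω), {n : ℕ | Y n ω = Y 0 ω}.Infinite := by
    filter_upwards [h1, h2, hstep] with ω hu hd hs
    by_contra hfin
    rw [Set.not_infinite] at hfin
    have h0 : (0 : ℕ) ∈ {n : ℕ | Y n ω = Y 0 ω} := rfl
    obtain ⟨m, hmS, hmax⟩ := Set.Finite.exists_maximalFor id _ hfin ⟨0, h0⟩
    have hub : ∀ a ∈ {n : ℕ | Y n ω = Y 0 ω}, a ≤ m := by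
      intro a ha
      by_contra hgt
      have := hmax ha (le_of_not_ge hgt)
      simp only [id] at this
      omega
    have hne : ∀ n, m < n → Y n ω ≠ Y m ω := by
      intro n hn heq
      have hmem : n ∈ {n : ℕ | Y n ω = Y 0 ω} := by
        simp only [Set.mem_setOf_eq] at hmS ⊢
        rw [heq]; exact hmS
      exact absurd (hub n hmem) (by omega)
    obtain ⟨na, hna⟩ := not_forall.mp (hu m)
    obtain ⟨nb, hnb⟩ := not_forall.mp (hd m)
    have hYa : Y (m + na + 1) ω < Y m ω :=
      lt_of_le_of_ne (not_lt.mp hna) (hne _ (by omega))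
    have hYb : Y m ω < Y (m + nb + 1) ω :=
      lt_of_le_of_ne (not_lt.mp hnb) (Ne.symm (hne _ (by omega)))
    rcases le_total (m + na + 1) (m + nb + 1) with hab | hab
    · obtain ⟨c, hac, hcb, hc⟩ := dekking_ivt (fun n => Y n ω) hs hab hYa.le hYb.le
      exact hne c (by omega) hc
    · obtain ⟨c, hac, hcb, hc⟩ := dekking_ivt (fun n => -Y n ω)
        (fun n => by rw [show -Y (n+1) ω - -Y n ω = -(Y (n+1) ω - Y n ω) by ring, abs_neg]; exact hs n)
        hab (neg_le_neg hYb.le) (neg_le_neg hYa.le)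
      exact hne c (by omega) (neg_inj.mp hc)
  -- recurrence at every time m, by stationarity
  have hG : MeasurableSet {z : ℕ → ℤ | {n : ℕ | z n = 0}.Infinite} := by
    have heq : {z : ℕ → ℤ | {n : ℕ | z n = 0}.Infinite}
        = ⋂ N : ℕ, ⋃ n : ℕ, ⋃ _ : N ≤ n, {z : ℕ → ℤ | z n = 0} := by
      ext z
      simp [dekking_inf_iff]
    rw [heq]
    refine MeasurableSet.iInter fun N => MeasurableSet.iUnion fun n => MeasurableSet.iUnion
      fun _ => ?_
    have : {z : ℕ → ℤ | z n = 0} = (fun z : ℕ → ℤ => z n) ⁻¹' {0} := rfl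
    rw [this]
    exact measurable_pi_apply n (measurableSet_singleton (0 : ℤ))
  have hrecm : ∀ m : ℕ, ∀ᵐ ω ∂(ℙ : Measure Ω), {n : ℕ | Y (m + n) ω = Y m ω}.Infinite := by
    intro m
    have hmapm : Measurable (fun ω => fun i : ℕ => Y (m + i) ω - Y m ω) :=
      measurable_pi_lambda _ fun i => (hmeas _).sub (hmeas m)
    have hmap0 : Measurable (fun ω => fun i : ℕ => Y i ω - Y 0 ω) :=
      measurable_pi_lambda _ fun i => (hmeas _).sub (hmeas 0)
    have hpre0 : (fun ω => fun i : ℕ => Y i ω - Y 0 ω) ⁻¹' {z | {n : ℕ | z n = 0}.Infinite}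
        = {ω | {n : ℕ | Y n ω = Y 0 ω}.Infinite} := by
      ext ω; simp only [Set.mem_preimage, Set.mem_setOf_eq, sub_eq_zero]
    have hprem : (fun ω => fun i : ℕ => Y (m + i) ω - Y m ω) ⁻¹' {z | {n : ℕ | z n = 0}.Infinite}
        = {ω | {n : ℕ | Y (m + n) ω = Y m ω}.Infinite} := by
      ext ω; simp only [Set.mem_preimage, Set.mem_setOf_eq, sub_eq_zero]
    have h0 : (ℙ : Measure Ω) {ω | {n : ℕ | Y n ω = Y 0 ω}.Infinite} = 1 := by
      rw [← hpre0, ← mem_ae_iff_prob_eq_one (hmap0 hG)]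
      rw [hpre0]
      exact hrec0
    have hm1 : (ℙ : Measure Ω) {ω | {n : ℕ | Y (m + n) ω = Y m ω}.Infinite} = 1 := by
      rw [← hprem, ← Measure.map_apply hmapm hG, hstat m, Measure.map_apply hmap0 hG, hpre0]
      exact h0
    rw [← hprem] at hm1
    have := (mem_ae_iff_prob_eq_one (hmapm hG)).2 hm1
    rw [hprem] at this
    exact this
  have hall : ∀ᵐ ω ∂(ℙ : Measure Ω), ∀ m : ℕ, {n : ℕ | Y (m + n) ω = Y m ω}.Infinite :=
    ae_all_iff.2 hrecm
  filter_upwards [hall] with ω hω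
  rintro k ⟨n, hn⟩
  have hinf := hω n
  have himg : ((fun i => n + i) '' {i : ℕ | Y (n + i) ω = Y n ω}).Infinite :=
    hinf.image ((add_right_injective n).injOn)
  refine himg.mono ?_
  rintro x ⟨i, hi, rfl⟩
  simp only [Set.mem_setOf_eq] at hi ⊢
  rw [hi, hn]
end
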